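/- arXiv:1812.00522 — 6 statements merged into one kernel-verified Lean document; each statement's English description precedes it below -/
import Mathlib

section
/- If u : ℝ → ℝ satisfies the Painlevé II equation u'' = t·u + 2u³ and a pair (q₂, α) satisfies the coupled ODE system q₂' = (2/3)·α·q₂ + (u'/u)·(1+q₂)(2−q₂)/3 and α' = α·((2/3)·α + (u'/u)·(2−q₂)/3) − (t/6)·(1+q₂) − (u²/3)·(3+q₂) on an interval where u ≠ 0, then the formal power series q₂(t) = 2^{-1/2}(−t)^{-3/2} + (21/8)(−t)^{-3} + O((−t)^{-9/2}) and α(t) = 2^{-1/2}(−t)^{1/2} − (1/8)(−t)^{-1} + O((−t)^{-5/2}) is an asymptotic solution of this system at t = −∞, given that u has the asymptotic expansion u(t) = √(−t/2)·(1 − (1/8)(−t)^{-3} + O((−t)^{-6})). -/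
open Real Filter Asymptotics Topology

namespace Stmt1Aux

/-- `Bnd f a` : eventually at `-∞`, `|f t| ≤ C * (-t)^a`. -/
def Bnd (f : ℝ → ℝ) (a : ℝ) : Prop :=
  ∃ C t₀, 0 ≤ C ∧ t₀ < 0 ∧ ∀ t ≤ t₀, |f t| ≤ C * (-t) ^ a

lemma Bnd.isBigO {f : ℝ → ℝ} {a : ℝ} (h : Bnd f a) :
    f =O[atBot] fun t => (-t) ^ a := by
  obtain ⟨C, t₀, _, ht₀, hb⟩ := h
  rw [isBigO_iff]
  refine ⟨C, eventually_atBot.2 ⟨t₀, fun t ht => ?_⟩⟩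
  have hpos : (0:ℝ) < -t := by linarith
  rw [Real.norm_eq_abs, Real.norm_eq_abs, abs_of_nonneg (Real.rpow_nonneg hpos.le _)]
  exact hb t ht

lemma Bnd.congr {f g : ℝ → ℝ} {a : ℝ} {t₁ : ℝ} (ht₁ : t₁ < 0)
    (hfg : ∀ t ≤ t₁, f t = g t) (h : Bnd g a) : Bnd f a := by
  obtain ⟨C, t₀, hC, ht₀, hb⟩ := h
  exact ⟨C, min t₀ t₁, hC, min_lt_of_left_lt ht₀, fun t ht => by
    rw [hfg t (le_trans ht (min_le_right _ _))]
    exact hb t (le_trans ht (min_le_left _ _))⟩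

lemma Bnd.of_abs_le {f g : ℝ → ℝ} {a : ℝ} {t₁ : ℝ} (ht₁ : t₁ < 0)
    (hfg : ∀ t ≤ t₁, |f t| ≤ |g t|) (h : Bnd g a) : Bnd f a := by
  obtain ⟨C, t₀, hC, ht₀, hb⟩ := h
  exact ⟨C, min t₀ t₁, hC, min_lt_of_left_lt ht₀, fun t ht =>
    le_trans (hfg t (le_trans ht (min_le_right _ _))) (hb t (le_trans ht (min_le_left _ _)))⟩

lemma Bnd.add {f g : ℝ → ℝ} {a : ℝ} (hf : Bnd f a) (hg : Bnd g a) :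
    Bnd (fun t => f t + g t) a := by
  obtain ⟨C, t₀, hC, ht₀, hb⟩ := hf
  obtain ⟨D, t₁, hD, ht₁, hb'⟩ := hg
  refine ⟨C + D, min t₀ t₁, by linarith, min_lt_of_left_lt ht₀, fun t ht => ?_⟩
  calc |f t + g t| ≤ |f t| + |g t| := abs_add_le _ _
    _ ≤ C * (-t) ^ a + D * (-t) ^ a :=
        add_le_add (hb t (le_trans ht (min_le_left _ _))) (hb' t (le_trans ht (min_le_right _ _)))
    _ = (C + D) * (-t) ^ a := by ring

lemma Bnd.mul {f g : ℝ → ℝ} {a b : ℝ} (hf : Bnd f a) (hg : Bnd g b) :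
    Bnd (fun t => f t * g t) (a + b) := by
  obtain ⟨C, t₀, hC, ht₀, hb⟩ := hf
  obtain ⟨D, t₁, hD, ht₁, hb'⟩ := hg
  refine ⟨C * D, min t₀ t₁, mul_nonneg hC hD, min_lt_of_left_lt ht₀, fun t ht => ?_⟩
  have hpos : (0:ℝ) < -t := by
    have h1 := le_trans ht (min_le_left t₀ t₁); linarith
  rw [Real.rpow_add hpos, abs_mul]
  calc |f t| * |g t| ≤ (C * (-t) ^ a) * (D * (-t) ^ b) :=
        mul_le_mul (hb t (le_trans ht (min_le_left _ _))) (hb' t (le_trans ht (min_le_right _ _)))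
          (abs_nonneg _) (mul_nonneg hC (Real.rpow_nonneg hpos.le _))
    _ = C * D * ((-t) ^ a * (-t) ^ b) := by ring

lemma Bnd.mono {f : ℝ → ℝ} {a b : ℝ} (hab : a ≤ b) (h : Bnd f a) : Bnd f b := by
  obtain ⟨C, t₀, hC, ht₀, hb⟩ := h
  refine ⟨C, min t₀ (-1), hC, min_lt_of_left_lt ht₀, fun t ht => ?_⟩
  have h1 : (1:ℝ) ≤ -t := by
    have := le_trans ht (min_le_right _ _); linarith
  calc |f t| ≤ C * (-t) ^ a := hb t (le_trans ht (min_le_left _ _))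
    _ ≤ C * (-t) ^ b := by
        exact mul_le_mul_of_nonneg_left (Real.rpow_le_rpow_of_exponent_le h1 hab) hC

lemma bnd_monomial (c a : ℝ) : Bnd (fun t => c * (-t) ^ a) a :=
  ⟨|c|, -1, abs_nonneg _, by norm_num, fun t ht => by
    have hpos : (0:ℝ) < -t := by linarith
    rw [abs_mul, abs_of_nonneg (Real.rpow_nonneg hpos.le _)]⟩

lemma Bnd.const_mul {f : ℝ → ℝ} {a : ℝ} (c : ℝ) (h : Bnd f a) :
    Bnd (fun t => c * f t) a := by
  obtain ⟨C, t₀, hC, ht₀, hb⟩ := h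
  refine ⟨|c| * C, t₀, mul_nonneg (abs_nonneg _) hC, ht₀, fun t ht => ?_⟩
  rw [abs_mul, mul_assoc]
  exact mul_le_mul_of_nonneg_left (hb t ht) (abs_nonneg _)

lemma Bnd.cast {f : ℝ → ℝ} {a b : ℝ} (h : Bnd f a) (hab : a = b) : Bnd f b := hab ▸ h

lemma bnd_exponent_shift (c a b : ℝ) (hab : a ≤ b) : Bnd (fun t => c * (-t) ^ a) b :=
  (bnd_monomial c a).mono hab

lemma neg_rpow_nat {x : ℝ} (hx : 0 < x) (n : ℕ) :
    x ^ (-(n : ℝ)/2) = (x ^ (-(1:ℝ)/2)) ^ n := by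
  rw [← Real.rpow_natCast (x ^ (-(1:ℝ)/2)) n, ← Real.rpow_mul hx.le]
  congr 1; ring

lemma z_sq {x : ℝ} (hx : 0 < x) : (x ^ ((1:ℝ)/2)) ^ 2 = x := by
  rw [← Real.rpow_natCast (x ^ ((1:ℝ)/2)) 2, ← Real.rpow_mul hx.le]
  norm_num

lemma yz {x : ℝ} (hx : 0 < x) : x ^ (-(1:ℝ)/2) * x ^ ((1:ℝ)/2) = 1 := by
  rw [← Real.rpow_add hx]; norm_num

lemma hasDerivAt_neg_rpow (a : ℝ) {t : ℝ} (ht : t < 0) :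
    HasDerivAt (fun s : ℝ => (-s) ^ a) (-(a * (-t) ^ (a-1))) t := by
  have h := (Real.hasDerivAt_rpow_const (x := -t) (p := a)
    (Or.inl (by linarith : -t ≠ 0))).comp t (hasDerivAt_neg t)
  exact h.congr_deriv (by ring)

lemma sqrt_half {t : ℝ} (ht : t < 0) :
    Real.sqrt (-t/2) = (-t) ^ ((1:ℝ)/2) / Real.sqrt 2 := by
  rw [Real.sqrt_div (by linarith : (0:ℝ) ≤ -t), Real.sqrt_eq_rpow]

lemma div_sqrt_two (X : ℝ) : X / Real.sqrt 2 = X * Real.sqrt 2 / 2 := by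
  rw [div_eq_div_iff (Real.sqrt_pos.mpr (by norm_num)).ne' two_ne_zero, mul_assoc,
    Real.mul_self_sqrt (by norm_num : (0:ℝ) ≤ 2)]



lemma hD1 {t : ℝ} (ht : t < 0) :
    HasDerivAt (fun s : ℝ => (-s)^(-(3:ℝ)/2)/Real.sqrt 2 + (21/8)*(-s)^(-(3:ℝ)))
      ((3/2)*(-t)^(-(5:ℝ)/2)/Real.sqrt 2 + (63/8)*(-t)^(-(4:ℝ))) t := by
  have h1 := (hasDerivAt_neg_rpow (-(3:ℝ)/2) ht).div_const (Real.sqrt 2)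
  have h2 := (hasDerivAt_neg_rpow (-(3:ℝ)) ht).const_mul ((21:ℝ)/8)
  refine (h1.add h2).congr_deriv ?_
  rw [show (-(3:ℝ)/2 - 1) = -(5:ℝ)/2 by norm_num, show (-(3:ℝ) - 1) = -(4:ℝ) by norm_num]
  ring

lemma hD2 {t : ℝ} (ht : t < 0) :
    HasDerivAt (fun s : ℝ => (-s)^((1:ℝ)/2)/Real.sqrt 2 - (1/8)*(-s)^(-(1:ℝ)))
      (-(1/2)*(-t)^(-(1:ℝ)/2)/Real.sqrt 2 - (1/8)*(-t)^(-(2:ℝ))) t := by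
  have h1 := (hasDerivAt_neg_rpow ((1:ℝ)/2) ht).div_const (Real.sqrt 2)
  have h2 := (hasDerivAt_neg_rpow (-(1:ℝ)) ht).const_mul ((1:ℝ)/8)
  refine (h1.sub h2).congr_deriv ?_
  rw [show ((1:ℝ)/2 - 1) = -(1:ℝ)/2 by norm_num, show (-(1:ℝ) - 1) = -(2:ℝ) by norm_num]
  ring

lemma hW' {t : ℝ} (ht : t < 0) :
    HasDerivAt (fun s : ℝ => -(Real.sqrt 2/4)*(-s)^(-(1:ℝ)/2))
      (-(Real.sqrt 2/8)*(-t)^(-(3:ℝ)/2)) t := by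
  have h1 := (hasDerivAt_neg_rpow (-(1:ℝ)/2) ht).const_mul (-(Real.sqrt 2/4))
  refine h1.congr_deriv ?_
  rw [show (-(1:ℝ)/2 - 1) = -(3:ℝ)/2 by norm_num]
  ring

lemma hPsi' {t : ℝ} (C : ℝ) (ht : t < 0) :
    HasDerivAt (fun s : ℝ => (2*C/7)*(-s)^(-(7:ℝ)/2)) (C*(-t)^(-(9:ℝ)/2)) t := by
  have h1 := (hasDerivAt_neg_rpow (-(7:ℝ)/2) ht).const_mul (2*C/7)
  refine h1.congr_deriv ?_
  rw [show (-(7:ℝ)/2 - 1) = -(9:ℝ)/2 by norm_num]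
  ring

lemma sqrt2_ge_one : (1:ℝ) ≤ Real.sqrt 2 := by
  nlinarith [Real.sq_sqrt (by norm_num : (0:ℝ) ≤ 2), Real.sqrt_nonneg 2]

lemma sqrt2_le : Real.sqrt 2 ≤ 3/2 := by
  nlinarith [Real.sq_sqrt (by norm_num : (0:ℝ) ≤ 2), Real.sqrt_nonneg 2]

-- antitone in base for negative exponent
lemma rpow_neg_exp_le {a b c : ℝ} (ha : 0 < a) (hab : a ≤ b) (hc : c ≤ 0) :
    b ^ c ≤ a ^ c := by
  rw [show c = -(-c) by ring, Real.rpow_neg (by linarith) (-c), Real.rpow_neg ha.le (-c)]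
  have h2 : a ^ (-c) ≤ b ^ (-c) := Real.rpow_le_rpow ha.le hab (by linarith)
  exact inv_anti₀ (Real.rpow_pos_of_pos ha _) h2

lemma contOn_neg_rpow (a : ℝ) : ContinuousOn (fun x : ℝ => (-x) ^ a) (Set.Iio 0) := by
  intro x hx
  simp only [Set.mem_Iio] at hx
  have hne : -x ≠ 0 := by linarith
  exact ((Real.continuousAt_rpow_const (-x) a (Or.inl hne)).comp
    (continuous_neg.continuousAt)).continuousWithinAt


noncomputable def mfun (t : ℝ) : ℝ := Real.sqrt (-t / 2) * (1 - (1 / 8) * (-t) ^ (-(3 : ℝ)))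

lemma rpow_to_pow {x : ℝ} (hx : 0 < x) (a : ℝ) (n : ℕ) (ha : a = -(1:ℝ)/2 * n) :
    x ^ a = (x ^ (-(1:ℝ)/2)) ^ n := by
  rw [ha, Real.rpow_mul hx.le, Real.rpow_natCast]

lemma sqrt2_mul_self : Real.sqrt 2 * Real.sqrt 2 = 2 :=
  Real.mul_self_sqrt (by norm_num)

lemma mfun_bounds {t : ℝ} (ht : t ≤ -1) :
    (7/16)*(-t)^((1:ℝ)/2) ≤ mfun t ∧ mfun t ≤ (3/4)*(-t)^((1:ℝ)/2) := by
  have hx : (0:ℝ) < -t := by linarith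
  have h1 : (1:ℝ) ≤ -t := by linarith
  have hz : (0:ℝ) < (-t)^((1:ℝ)/2) := Real.rpow_pos_of_pos hx _
  have hp0 : (0:ℝ) < (-t)^(-(3:ℝ)) := Real.rpow_pos_of_pos hx _
  have hp1 : (-t)^(-(3:ℝ)) ≤ 1 := Real.rpow_le_one_of_one_le_of_nonpos h1 (by norm_num)
  have hm : mfun t = ((-t)^((1:ℝ)/2)*Real.sqrt 2/2) * (1 - (1/8)*(-t)^(-(3:ℝ))) := by
    simp only [mfun]
    rw [sqrt_half (by linarith), div_sqrt_two]
  constructor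
  · rw [hm]
    nlinarith [mul_nonneg hz.le (sub_nonneg.2 sqrt2_ge_one),
      mul_nonneg (mul_nonneg hz.le (by linarith [sqrt2_ge_one] : (0:ℝ) ≤ Real.sqrt 2))
        (by linarith : (0:ℝ) ≤ 1 - (-t)^(-(3:ℝ)))]
  · rw [hm]
    nlinarith [mul_nonneg hz.le (sub_nonneg.2 sqrt2_le),
      mul_nonneg (mul_nonneg hz.le (by linarith [sqrt2_ge_one] : (0:ℝ) ≤ Real.sqrt 2)) hp0.le]

set_option maxHeartbeats 2000000 in
lemma key (u u' : ℝ → ℝ)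
    (hu : ∀ t, HasDerivAt u (u' t) t)
    (huODE : ∀ t, HasDerivAt u' (t * u t + 2 * (u t) ^ 3) t)
    (hupos : ∀ t, 0 < u t)
    (huasymp : (fun t => u t - Real.sqrt (-t / 2) * (1 - (1 / 8) * (-t) ^ (-(3 : ℝ))))
      =O[atBot] (fun t => Real.sqrt (-t / 2) * (-t) ^ (-(6 : ℝ)))) :
    Bnd (fun t => u' t / u t + ((-t) ^ (-(1:ℝ)/2))^2 / 2) (-(4:ℝ)) ∧
    Bnd (fun t => (u t)^2 + t/2 + (1/8) * (-t) ^ (-(2:ℝ))) (-(5:ℝ)) := by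
  have hcu : Continuous u := Differentiable.continuous (fun x => (hu x).differentiableAt)
  have hcu' : Continuous u' :=
    Differentiable.continuous (fun x => (huODE x).differentiableAt)
  -- Step 1 : pointwise bound on u - mfun
  have he₀ : Bnd (fun t => u t - mfun t) (-(11:ℝ)/2) := by
    obtain ⟨C, hC⟩ := isBigO_iff.1 huasymp
    obtain ⟨t₁, hb⟩ := eventually_atBot.1 hC
    refine ⟨max C 0, min t₁ (-1), le_max_right _ _, by
      have := min_le_right t₁ (-1); linarith, fun t ht => ?_⟩
    have hx : (0:ℝ) < -t := by have := le_trans ht (min_le_right _ _); linarith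
    have h2 := hb t (le_trans ht (min_le_left _ _))
    rw [Real.norm_eq_abs, Real.norm_eq_abs] at h2
    have hsq : Real.sqrt (-t/2) ≤ (-t)^((1:ℝ)/2) := by
      rw [← Real.sqrt_eq_rpow]
      exact Real.sqrt_le_sqrt (by linarith)
    have habs : |Real.sqrt (-t/2) * (-t)^(-(6:ℝ))| = Real.sqrt (-t/2) * (-t)^(-(6:ℝ)) :=
      abs_of_nonneg (mul_nonneg (Real.sqrt_nonneg _) (Real.rpow_nonneg hx.le _))
    rw [habs] at h2
    have hmono : Real.sqrt (-t/2) * (-t)^(-(6:ℝ)) ≤ (-t)^(-(11:ℝ)/2) := by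
      calc Real.sqrt (-t/2) * (-t)^(-(6:ℝ)) ≤ (-t)^((1:ℝ)/2) * (-t)^(-(6:ℝ)) :=
            mul_le_mul_of_nonneg_right hsq (Real.rpow_nonneg hx.le _)
        _ = (-t)^(-(11:ℝ)/2) := by rw [← Real.rpow_add hx]; norm_num
    calc |u t - mfun t| ≤ C * (Real.sqrt (-t/2) * (-t)^(-(6:ℝ))) := h2
      _ ≤ max C 0 * (-t)^(-(11:ℝ)/2) :=
          mul_le_mul (le_max_left _ _) hmono
            (mul_nonneg (Real.sqrt_nonneg _) (Real.rpow_nonneg hx.le _)) (le_max_right _ _)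
  obtain ⟨C₀, t₁, hC₀, ht₁, hbe⟩ := he₀
  have hbe' : Bnd (fun t => u t - mfun t) (-(11:ℝ)/2) := ⟨C₀, t₁, hC₀, ht₁, hbe⟩
  set τ₁ : ℝ := min t₁ (-(1 + 16*(C₀+1)/3)) with hτ₁def
  have hτ₁le : τ₁ ≤ -1 := le_trans (min_le_right _ _) (by nlinarith)
  have hτ₁neg : τ₁ < 0 := lt_of_le_of_lt hτ₁le (by norm_num)
  -- Step 2 : pointwise bounds on u
  have hularge : ∀ t ≤ τ₁, |u t - mfun t| ≤ (3/16)*(-t)^((1:ℝ)/2) := by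
    intro t ht
    have hx : (0:ℝ) < -t := by have := le_trans ht hτ₁le; linarith
    have h1 : (1:ℝ) ≤ -t := by have := le_trans ht hτ₁le; linarith
    have hT : 16*(C₀+1)/3 ≤ -t := by
      have := le_trans ht (min_le_right _ _); linarith
    have e1 : (-t)^(-(11:ℝ)/2) = (-t)^(-(6:ℝ)) * (-t)^((1:ℝ)/2) := by
      rw [← Real.rpow_add hx]; norm_num
    have e2 : (-t)^(-(6:ℝ)) ≤ (-t)⁻¹ := by
      rw [← Real.rpow_neg_one (-t)]
      exact Real.rpow_le_rpow_of_exponent_le h1 (by norm_num)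
    have e3 : (-t)⁻¹ ≤ 3/(16*(C₀+1)) := by
      rw [show (3:ℝ)/(16*(C₀+1)) = (16*(C₀+1)/3)⁻¹ by rw [inv_div]]
      exact inv_anti₀ (by positivity) hT
    have hznn : (0:ℝ) ≤ (-t)^((1:ℝ)/2) := Real.rpow_nonneg hx.le _
    calc |u t - mfun t| ≤ C₀ * (-t)^(-(11:ℝ)/2) := hbe t (le_trans ht (min_le_left _ _))
      _ = C₀ * (-t)^(-(6:ℝ)) * (-t)^((1:ℝ)/2) := by rw [e1]; ring
      _ ≤ (3/16)*(-t)^((1:ℝ)/2) := by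
          have h6 : (-t)^(-(6:ℝ)) ≤ 3/(16*(C₀+1)) := le_trans e2 e3
          have h7 : C₀ * (-t)^(-(6:ℝ)) ≤ 3/16 := by
            calc C₀ * (-t)^(-(6:ℝ)) ≤ C₀ * (3/(16*(C₀+1))) :=
                  mul_le_mul_of_nonneg_left h6 hC₀
              _ ≤ 3/16 := by
                  rw [show C₀*(3/(16*(C₀+1))) = 3*C₀/(16*(C₀+1)) by ring,
                    div_le_div_iff₀ (by positivity) (by norm_num : (0:ℝ) < 16)]
                  nlinarith
          exact mul_le_mul_of_nonneg_right h7 hznn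
  have hul : ∀ t ≤ τ₁, (1/4)*(-t)^((1:ℝ)/2) ≤ u t ∧ u t ≤ (-t)^((1:ℝ)/2) := by
    intro t ht
    have hmb := mfun_bounds (le_trans ht hτ₁le)
    have he := abs_le.1 (hularge t ht)
    have hx : (0:ℝ) < -t := by have := le_trans ht hτ₁le; linarith
    have hznn : (0:ℝ) ≤ (-t)^((1:ℝ)/2) := Real.rpow_nonneg hx.le _
    constructor
    · linarith [hmb.1, he.1]
    · linarith [hmb.2, he.2]
  have hbu : Bnd u ((1:ℝ)/2) := ⟨1, τ₁, by norm_num, hτ₁neg, fun t ht => by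
    rw [abs_of_pos (hupos t), one_mul]; exact (hul t ht).2⟩
  have hbum : Bnd (fun t => u t + mfun t) ((1:ℝ)/2) := by
    refine ⟨2, τ₁, by norm_num, hτ₁neg, fun t ht => ?_⟩
    have h1 := hul t ht
    have h2 := mfun_bounds (le_trans ht hτ₁le)
    have hx : (0:ℝ) < -t := by have := le_trans ht hτ₁le; linarith
    have hznn : (0:ℝ) ≤ (-t)^((1:ℝ)/2) := Real.rpow_nonneg hx.le _
    rw [abs_of_pos (by nlinarith [hupos t, h2.1] : (0:ℝ) < u t + mfun t)]
    nlinarith [h1.2, h2.2]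
  -- Step 3 : u^2 asymptotics
  have husq : Bnd (fun t => (u t)^2 + t/2 + (1/8)*(-t)^(-(2:ℝ))) (-(5:ℝ)) := by
    have hb1 : Bnd (fun t => (u t - mfun t)*(u t + mfun t) + (1/128)*(-t)^(-(5:ℝ)))
        (-(5:ℝ)) :=
      ((hbe'.mul hbum).cast (by norm_num)).add (bnd_monomial _ _)
    refine Bnd.congr (t₁ := -1) (by norm_num) (fun t ht => ?_) hb1
    have hx : (0:ℝ) < -t := by linarith
    have hm2 : mfun t^2 = ((-t)^((1:ℝ)/2))^2/2 - (1/8)*((-t)^(-(1:ℝ)/2))^4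
        + (1/128)*((-t)^(-(1:ℝ)/2))^10 := by
      simp only [mfun]
      rw [sqrt_half (by linarith), div_sqrt_two, rpow_to_pow hx (-(3:ℝ)) 6 (by norm_num)]
      linear_combination ((-1/16:ℝ)*((-t)^(-(1:ℝ)/2))^4*(Real.sqrt 2)^2
          + (-1/16)*((-t)^(-(1:ℝ)/2))^5*((-t)^((1:ℝ)/2))*(Real.sqrt 2)^2
          + (1/256)*((-t)^(-(1:ℝ)/2))^10*(Real.sqrt 2)^2
          + (1/256)*((-t)^(-(1:ℝ)/2))^11*((-t)^((1:ℝ)/2))*(Real.sqrt 2)^2) * (yz hx)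
        + ((1/4:ℝ)*((-t)^((1:ℝ)/2))^2 + (-1/16)*((-t)^(-(1:ℝ)/2))^4
          + (1/256)*((-t)^(-(1:ℝ)/2))^10) * sqrt2_mul_self
    rw [rpow_to_pow hx (-(2:ℝ)) 4 (by norm_num), rpow_to_pow hx (-(5:ℝ)) 10 (by norm_num)]
    linear_combination hm2 + (1/2) * z_sq hx
  -- Step 4 : bound on u'' - w''
  have hg : Bnd (fun t => t*u t + 2*(u t)^3 + (Real.sqrt 2/8)*(-t)^(-(3:ℝ)/2)) (-(9:ℝ)/2) := by
    have hb1 : Bnd (fun t => 2*(u t*((u t)^2 + t/2 + (1/8)*(-t)^(-(2:ℝ))))) (-(9:ℝ)/2) :=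
      (Bnd.const_mul 2 ((hbu.mul husq).cast (by norm_num)))
    have hb2 : Bnd (fun t => ((-1/4)*(-t)^(-(2:ℝ)))*(u t - mfun t)) (-(9:ℝ)/2) :=
      ((bnd_monomial (-1/4) (-(2:ℝ))).mul hbe').mono (by norm_num)
    have hb3 := bnd_monomial (Real.sqrt 2/64) (-(9:ℝ)/2)
    refine Bnd.congr hτ₁neg (fun t ht => ?_) ((hb1.add hb2).add hb3)
    have hx : (0:ℝ) < -t := by have := le_trans ht hτ₁le; linarith
    simp only [mfun]
    rw [sqrt_half (by linarith), div_sqrt_two, rpow_to_pow hx (-(3:ℝ)/2) 3 (by norm_num),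
      rpow_to_pow hx (-(2:ℝ)) 4 (by norm_num), rpow_to_pow hx (-(9:ℝ)/2) 9 (by norm_num),
      rpow_to_pow hx (-(3:ℝ)) 6 (by norm_num)]
    linear_combination ((-1/8:ℝ)*((-t)^(-(1:ℝ)/2))^3*Real.sqrt 2
      + (1/64)*((-t)^(-(1:ℝ)/2))^9*Real.sqrt 2) * (yz hx)
  -- Step 5 : limit argument for u'
  obtain ⟨C₃, τ₃', hC₃, hτ₃', hgb⟩ := hg
  set τ₃ : ℝ := min τ₃' τ₁ with hτ₃def
  have hτ₃neg : τ₃ < 0 := lt_of_le_of_lt (min_le_right _ _) hτ₁neg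
  set W : ℝ → ℝ := fun t => -(Real.sqrt 2/4)*(-t)^(-(1:ℝ)/2) with hWdef
  set Ψ : ℝ → ℝ := fun t => (2*C₃/7)*(-t)^(-(7:ℝ)/2) with hΨdef
  have hΨnn : ∀ t, t < 0 → 0 ≤ Ψ t := fun t ht =>
    mul_nonneg (by linarith) (Real.rpow_nonneg (by linarith) _)
  have hΨmono : ∀ a b : ℝ, a ≤ b → b < 0 → Ψ a ≤ Ψ b := by
    intro a b hab hb
    exact mul_le_mul_of_nonneg_left
      (rpow_neg_exp_le (by linarith) (by linarith) (by norm_num)) (by linarith)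
  have hphi : ∀ r, r ≤ τ₃ → ∀ s, s ≤ r → |(u' r - W r) - (u' s - W s)| ≤ Ψ r := by
    intro r hr s hs
    have hr0 : r < 0 := lt_of_le_of_lt hr hτ₃neg
    have hsub : Set.uIcc s r ⊆ Set.Iio 0 := by
      rw [Set.uIcc_of_le hs]
      intro x hx
      exact Set.mem_Iio.2 (lt_of_le_of_lt hx.2 hr0)
    have hWd : ∀ x ∈ Set.uIcc s r, HasDerivAt (fun t => u' t - W t)
        (x*u x + 2*(u x)^3 - (-(Real.sqrt 2/8)*(-x)^(-(3:ℝ)/2))) x := by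
      intro x hx
      exact (huODE x).sub (hW' (hsub hx))
    have hcont1 : ContinuousOn
        (fun x => x*u x + 2*(u x)^3 - (-(Real.sqrt 2/8)*(-x)^(-(3:ℝ)/2)))
        (Set.uIcc s r) := by
      apply ContinuousOn.sub
      · exact (by fun_prop : Continuous (fun x => x*u x + 2*(u x)^3)).continuousOn
      · exact ((continuousOn_const.mul (contOn_neg_rpow _)).mono hsub)
    have hFTC := intervalIntegral.integral_eq_sub_of_hasDerivAt hWd
      hcont1.intervalIntegrable
    have hcont2 : ContinuousOn (fun x => C₃*(-x)^(-(9:ℝ)/2)) (Set.uIcc s r) :=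
      (continuousOn_const.mul (contOn_neg_rpow _)).mono hsub
    have hΨd : ∀ x ∈ Set.uIcc s r, HasDerivAt Ψ (C₃*(-x)^(-(9:ℝ)/2)) x :=
      fun x hx => hPsi' C₃ (hsub hx)
    have hFTC2 := intervalIntegral.integral_eq_sub_of_hasDerivAt hΨd
      hcont2.intervalIntegrable
    have habs : |∫ x in s..r, (x*u x + 2*(u x)^3 - (-(Real.sqrt 2/8)*(-x)^(-(3:ℝ)/2)))|
        ≤ ∫ x in s..r, C₃*(-x)^(-(9:ℝ)/2) := by
      refine le_trans (intervalIntegral.abs_integral_le_integral_abs hs) ?_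
      apply intervalIntegral.integral_mono_on hs (hcont1.abs.intervalIntegrable)
        (hcont2.intervalIntegrable)
      intro x hx
      have hxτ : x ≤ τ₃' := le_trans hx.2 (le_trans hr (min_le_left _ _))
      have := hgb x hxτ
      calc |x*u x + 2*(u x)^3 - (-(Real.sqrt 2/8)*(-x)^(-(3:ℝ)/2))|
          = |x*u x + 2*(u x)^3 + (Real.sqrt 2/8)*(-x)^(-(3:ℝ)/2)| := by ring_nf
        _ ≤ C₃ * (-x)^(-(9:ℝ)/2) := this
    rw [hFTC, hFTC2] at habs
    have hs0 : s < 0 := lt_of_le_of_lt hs hr0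
    have hΨs : 0 ≤ Ψ s := hΨnn s hs0
    calc |(u' r - W r) - (u' s - W s)| ≤ Ψ r - Ψ s := habs
      _ ≤ Ψ r := by linarith
  -- Cauchy sequence and limit
  have hseq : ∃ L, Tendsto (fun n : ℕ => u' (τ₃ - n) - W (τ₃ - n)) atTop (𝓝 L) := by
    apply cauchySeq_tendsto_of_complete
    apply cauchySeq_of_le_tendsto_0 (fun N : ℕ => Ψ (τ₃ - N))
    · intro n m N hn hm
      have key : ∀ a b : ℕ, a ≤ b →
          dist (u' (τ₃ - a) - W (τ₃ - a)) (u' (τ₃ - b) - W (τ₃ - b)) ≤ Ψ (τ₃ - a) := by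
        intro a b hab
        rw [Real.dist_eq]
        refine hphi (τ₃ - a) ?_ (τ₃ - b) ?_
        · have h9 : (0:ℝ) ≤ a := Nat.cast_nonneg a
          linarith
        · have h9 : (a:ℝ) ≤ b := by exact_mod_cast hab
          linarith
      rcases le_total n m with h | h
      · refine le_trans (key n m h) (hΨmono _ _ ?_ ?_)
        · have h9 : (N:ℝ) ≤ n := by exact_mod_cast hn
          linarith
        · have h9 : (0:ℝ) ≤ N := Nat.cast_nonneg N
          linarith
      · rw [dist_comm]
        refine le_trans (key m n h) (hΨmono _ _ ?_ ?_)
        · have h9 : (N:ℝ) ≤ m := by exact_mod_cast hm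
          linarith
        · have h9 : (0:ℝ) ≤ N := Nat.cast_nonneg N
          linarith
    · have h1 : Tendsto (fun N : ℕ => -(τ₃ - (N:ℝ))) atTop atTop := by
        have h2 := tendsto_natCast_atTop_atTop (R := ℝ)
        have h3 := tendsto_atTop_add_const_right atTop (-τ₃) h2
        convert h3 using 2 with N
        ring
      have h2 : Tendsto (fun N : ℕ => (-(τ₃ - (N:ℝ)))^(-(7:ℝ)/2)) atTop (𝓝 0) := by
        have h4 := (tendsto_rpow_neg_atTop (by norm_num : (0:ℝ) < 7/2)).comp h1
        convert h4 using 2 with N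
        norm_num
      have h6 : (fun N : ℕ => Ψ (τ₃ - N)) = fun N : ℕ =>
          (2*C₃/7) * (-(τ₃ - (N:ℝ)))^(-(7:ℝ)/2) := by
        funext N; simp only [hΨdef]
      rw [h6]
      have h7 := h2.const_mul (2*C₃/7)
      simpa using h7
  obtain ⟨L, hL⟩ := hseq
  have hLbound : ∀ r, r ≤ τ₃ → |u' r - W r - L| ≤ Ψ r := by
    intro r hr
    have h1 : Tendsto (fun n : ℕ => |u' r - W r - (u' (τ₃ - n) - W (τ₃ - n))|) atTop
        (𝓝 |u' r - W r - L|) :=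
      (continuous_abs.tendsto _).comp (tendsto_const_nhds.sub hL)
    apply le_of_tendsto h1
    filter_upwards [eventually_ge_atTop (Nat.ceil (τ₃ - r))] with n hn
    have h2 : τ₃ - (n:ℝ) ≤ r := by
      have h3 : τ₃ - r ≤ (n:ℝ) := le_trans (Nat.le_ceil _) (by exact_mod_cast hn)
      linarith
    exact hphi r hr _ h2
  -- limits at -infinity
  have hnegtop : Tendsto (fun t : ℝ => -t) atBot atTop := tendsto_neg_atBot_atTop
  have hWlim : Tendsto W atBot (𝓝 0) := by
    have h2 := (tendsto_rpow_neg_atTop (by norm_num : (0:ℝ) < 1/2)).comp hnegtop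
    have h3 : Tendsto (fun t : ℝ => (-t)^(-(1:ℝ)/2)) atBot (𝓝 0) := by
      convert h2 using 2 with t
      norm_num
    rw [hWdef]
    simpa using h3.const_mul (-(Real.sqrt 2/4))
  have hΨlim : Tendsto Ψ atBot (𝓝 0) := by
    have h2 := (tendsto_rpow_neg_atTop (by norm_num : (0:ℝ) < 7/2)).comp hnegtop
    have h3 : Tendsto (fun t : ℝ => (-t)^(-(7:ℝ)/2)) atBot (𝓝 0) := by
      convert h2 using 2 with t
      norm_num
    rw [hΨdef]
    simpa using h3.const_mul (2*C₃/7)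
  have hφlim : Tendsto (fun t => u' t - W t) atBot (𝓝 L) := by
    rw [← tendsto_sub_nhds_zero_iff]
    apply squeeze_zero_norm' (a := Ψ) _ hΨlim
    exact eventually_atBot.2 ⟨τ₃, fun t ht => by
      rw [Real.norm_eq_abs]; exact hLbound t ht⟩
  have hu'lim : Tendsto u' atBot (𝓝 L) := by
    have h6 := hφlim.add hWlim
    simpa using h6
  -- L = 0
  have hL0 : L = 0 := by
    by_contra hLne
    rcases lt_or_gt_of_ne hLne with hLneg | hLpos
    · -- L < 0 : u would grow linearly, contradicting u ≤ (-t)^(1/2)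
      have hev := hu'lim.eventually (eventually_lt_nhds (by linarith : L < L/2))
      obtain ⟨t₄', ht₄'⟩ := eventually_atBot.1 hev
      set t₄ : ℝ := min t₄' (min τ₁ (-1)) with ht₄def
      have ht₄τ₁ : t₄ ≤ τ₁ := le_trans (min_le_right _ _) (min_le_left _ _)
      have ht₄1 : t₄ ≤ -1 := le_trans (min_le_right _ _) (min_le_right _ _)
      have hK : (0:ℝ) < -L := by linarith
      set t : ℝ := min (2*t₄) (-(4/(-L))^2 - 1) with htdef
      have htt₄ : t ≤ t₄ := le_trans (min_le_left _ _) (by linarith)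
      have hint : ∫ x in t..t₄, u' x = u t₄ - u t :=
        intervalIntegral.integral_eq_sub_of_hasDerivAt (fun x _ => hu x)
          (hcu'.continuousOn.intervalIntegrable)
      have hmono : ∫ x in t..t₄, u' x ≤ ∫ _x in t..t₄, (L/2 : ℝ) := by
        apply intervalIntegral.integral_mono_on htt₄
          (hcu'.continuousOn.intervalIntegrable) intervalIntegrable_const
        intro x hx
        exact le_of_lt (ht₄' x (le_trans hx.2 (min_le_left _ _)))
      rw [hint, intervalIntegral.integral_const, smul_eq_mul] at hmono
      have hu_ge : u t₄ + (-L/2)*(t₄ - t) ≤ u t := by linarith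
      have hu_le : u t ≤ (-t)^((1:ℝ)/2) := (hul t (le_trans htt₄ ht₄τ₁)).2
      have ht2 : t ≤ 2*t₄ := min_le_left _ _
      have ht3 : t ≤ -(4/(-L))^2 - 1 := min_le_right _ _
      have hx : (0:ℝ) < -t := by
        have h9 : (0:ℝ) ≤ (4/(-L))^2 := sq_nonneg _
        linarith
      have hzK : 4/(-L) ≤ (-t)^((1:ℝ)/2) := by
        rw [← Real.sqrt_eq_rpow]
        calc 4/(-L) = Real.sqrt ((4/(-L))^2) := (Real.sqrt_sq (by positivity)).symm
          _ ≤ Real.sqrt (-t) := Real.sqrt_le_sqrt (by linarith)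
      have hzz : (-t)^((1:ℝ)/2)*(-t)^((1:ℝ)/2) = -t := by
        rw [← Real.rpow_add hx]; norm_num
      have hz0 : (0:ℝ) < (-t)^((1:ℝ)/2) := Real.rpow_pos_of_pos hx _
      have hA : (-t)^((1:ℝ)/2) * (4/(-L)) ≤ -t := by
        have h9 := mul_le_mul_of_nonneg_left hzK hz0.le
        rwa [hzz] at h9
      have hB : 4*((-t)^((1:ℝ)/2)) ≤ (-L)*(-t) := by
        have h9 := mul_le_mul_of_nonneg_left hA hK.le
        calc 4*((-t)^((1:ℝ)/2)) = (-L)*((-t)^((1:ℝ)/2) * (4/(-L))) := by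
              field_simp
          _ ≤ (-L)*(-t) := h9
      have hC : (0:ℝ) ≤ (-L)*(t₄ - t/2) :=
        mul_nonneg hK.le (by linarith : (0:ℝ) ≤ t₄ - t/2)
      linarith [hupos t₄, hB, hC, hu_ge, hu_le]
    · -- L > 0 : u would become negative
      have hev := hu'lim.eventually (eventually_gt_nhds (by linarith : L/2 < L))
      obtain ⟨t₄', ht₄'⟩ := eventually_atBot.1 hev
      set t₄ : ℝ := min t₄' (-1) with ht₄def
      set t : ℝ := t₄ - (2*(u t₄)/L + 1) with htdef
      have htt₄ : t ≤ t₄ := by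
        have := hupos t₄
        have h7 : (0:ℝ) < 2*(u t₄)/L := div_pos (by linarith) hLpos
        rw [htdef]; linarith
      have hint : ∫ x in t..t₄, u' x = u t₄ - u t :=
        intervalIntegral.integral_eq_sub_of_hasDerivAt (fun x _ => hu x)
          (hcu'.continuousOn.intervalIntegrable)
      have hmono : ∫ _x in t..t₄, (L/2 : ℝ) ≤ ∫ x in t..t₄, u' x := by
        apply intervalIntegral.integral_mono_on htt₄ intervalIntegrable_const
          (hcu'.continuousOn.intervalIntegrable)
        intro x hx
        exact le_of_lt (ht₄' x (le_trans hx.2 (min_le_left _ _)))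
      rw [hint, intervalIntegral.integral_const, smul_eq_mul] at hmono
      have harith : (t₄ - t)*(L/2) = u t₄ + L/2 := by
        rw [htdef]
        field_simp
        ring
      rw [harith] at hmono
      linarith [hupos t]
  -- quantitative bound on u' - W
  have hφ0 : Bnd (fun t => u' t - W t) (-(7:ℝ)/2) := by
    refine ⟨2*C₃/7, τ₃, by linarith, hτ₃neg, fun t ht => ?_⟩
    have h9 := hLbound t ht
    rw [hL0, sub_zero] at h9
    exact h9
  -- Step 6 : numerator bound
  have hWm : Bnd (fun t => W t + mfun t * (((-t)^(-(1:ℝ)/2))^2/2)) (-(7:ℝ)/2) := by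
    refine Bnd.congr (t₁ := -1) (by norm_num) (fun t ht => ?_)
      (bnd_monomial (-(Real.sqrt 2/32)) (-(7:ℝ)/2))
    have hx : (0:ℝ) < -t := by linarith
    simp only [hWdef, mfun]
    rw [sqrt_half (by linarith), div_sqrt_two, rpow_to_pow hx (-(3:ℝ)) 6 (by norm_num),
      rpow_to_pow hx (-(7:ℝ)/2) 7 (by norm_num)]
    linear_combination ((1/4:ℝ)*((-t)^(-(1:ℝ)/2))*Real.sqrt 2
      + (-1/32)*((-t)^(-(1:ℝ)/2))^7*Real.sqrt 2) * (yz hx)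
  have hy2 : Bnd (fun t => ((-t)^(-(1:ℝ)/2))^2/2) (-(1:ℝ)) := by
    refine Bnd.congr (t₁ := -1) (by norm_num) (fun t ht => ?_) (bnd_monomial (1/2) (-(1:ℝ)))
    have hx : (0:ℝ) < -t := by linarith
    rw [rpow_to_pow hx (-(1:ℝ)) 2 (by norm_num)]
    ring
  have hbN : Bnd (fun t => u' t + u t * (((-t)^(-(1:ℝ)/2))^2/2)) (-(7:ℝ)/2) := by
    have h1 : Bnd (fun t => (u t - mfun t) * (((-t)^(-(1:ℝ)/2))^2/2)) (-(7:ℝ)/2) :=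
      (hbe'.mul hy2).mono (by norm_num)
    refine Bnd.congr hτ₃neg (fun t ht => ?_) ((hφ0.add hWm).add h1)
    ring
  -- Step 7 : the ratio bound
  have heps1 : Bnd (fun t => u' t / u t + ((-t) ^ (-(1:ℝ)/2))^2 / 2) (-(4:ℝ)) := by
    obtain ⟨C₅, τ₅, hC₅, hτ₅, hNb⟩ := hbN
    refine ⟨4*C₅, min τ₅ τ₁, by linarith, min_lt_of_left_lt hτ₅, fun t ht => ?_⟩
    have htτ₁ : t ≤ τ₁ := le_trans ht (min_le_right _ _)
    have hx : (0:ℝ) < -t := by have := le_trans htτ₁ hτ₁le; linarith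
    have hu1 := (hul t htτ₁).1
    have hupos' := hupos t
    have heq : u' t / u t + ((-t) ^ (-(1:ℝ)/2))^2/2
        = (u' t + u t * (((-t)^(-(1:ℝ)/2))^2/2)) / u t := by
      field_simp
    show |u' t / u t + ((-t) ^ (-(1:ℝ)/2))^2 / 2| ≤ 4*C₅*(-t)^(-(4:ℝ))
    rw [heq, abs_div, abs_of_pos hupos']
    have h1 : |u' t + u t * (((-t)^(-(1:ℝ)/2))^2/2)| ≤ C₅*(-t)^(-(7:ℝ)/2) :=
      hNb t (le_trans ht (min_le_left _ _))
    have hz0 : (0:ℝ) < (-t)^((1:ℝ)/2) := Real.rpow_pos_of_pos hx _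
    calc |u' t + u t * (((-t)^(-(1:ℝ)/2))^2/2)| / u t
        ≤ (C₅*(-t)^(-(7:ℝ)/2)) / ((1/4)*(-t)^((1:ℝ)/2)) :=
          div_le_div₀ (by positivity) h1 (by linarith) hu1
      _ = 4*C₅*(-t)^(-(4:ℝ)) := by
          rw [show (-t)^(-(4:ℝ)) = (-t)^(-(7:ℝ)/2) / (-t)^((1:ℝ)/2) by
            rw [← Real.rpow_sub hx]; norm_num]
          field_simp
  exact ⟨heps1, husq⟩




lemma qhat_bounds {t : ℝ} (ht : t ≤ -1) :
    0 ≤ (-t)^(-(3:ℝ)/2)/Real.sqrt 2 + (21/8)*(-t)^(-(3:ℝ)) ∧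
    (-t)^(-(3:ℝ)/2)/Real.sqrt 2 + (21/8)*(-t)^(-(3:ℝ)) ≤ 4 := by
  have hx : (0:ℝ) < -t := by linarith
  have h1 : (1:ℝ) ≤ -t := by linarith
  have hq1 : 0 ≤ (-t)^(-(3:ℝ)/2)/Real.sqrt 2 := by positivity
  have hq2 : (-t)^(-(3:ℝ)/2)/Real.sqrt 2 ≤ 1 := by
    have h2 := Real.rpow_le_one_of_one_le_of_nonpos h1 (by norm_num : -(3:ℝ)/2 ≤ 0)
    have h3 : (-t)^(-(3:ℝ)/2)/Real.sqrt 2 ≤ (-t)^(-(3:ℝ)/2) :=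
      div_le_self (Real.rpow_nonneg hx.le _) sqrt2_ge_one
    linarith
  have hq3 : 0 ≤ (21/8)*(-t)^(-(3:ℝ)) := by positivity
  have hq4 : (-t)^(-(3:ℝ)) ≤ 1 := Real.rpow_le_one_of_one_le_of_nonpos h1 (by norm_num)
  constructor <;> nlinarith

end Stmt1Aux

open Stmt1Aux in
/-- If `u` is the Hastings–McLeod solution of Painlevé II and `(q₂, α)` satisfies
the coupled ODE system of Grava et al., then the truncated series
`q₂ ≈ 2^{-1/2}(−t)^{-3/2} + (21/8)(−t)^{-3}` and
`α ≈ 2^{-1/2}(−t)^{1/2} − (1/8)(−t)^{-1}` is an asymptotic solution of the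
system at `t = −∞`: substituting it into the ODEs produces residuals of
higher order, `O((−t)^{-4})` resp. `O((−t)^{-2})`. -/
theorem stmt1 (u u' q2 α : ℝ → ℝ)
    (hu : ∀ t, HasDerivAt u (u' t) t)
    (huODE : ∀ t, HasDerivAt u' (t * u t + 2 * (u t) ^ 3) t)
    (hupos : ∀ t, 0 < u t)
    (hq2 : ∀ t, HasDerivAt q2
      ((2 / 3) * α t * q2 t + (u' t / u t) * ((1 + q2 t) * (2 - q2 t) / 3)) t)
    (hα : ∀ t, HasDerivAt α
      (α t * ((2 / 3) * α t + (u' t / u t) * ((2 - q2 t) / 3))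
        - (t / 6) * (1 + q2 t) - ((u t) ^ 2 / 3) * (3 + q2 t)) t)
    (huasymp : (fun t => u t - Real.sqrt (-t / 2) * (1 - (1 / 8) * (-t) ^ (-(3 : ℝ))))
      =O[atBot] (fun t => Real.sqrt (-t / 2) * (-t) ^ (-(6 : ℝ)))) :
    (fun t =>
        deriv (fun s => (-s) ^ (-(3 : ℝ) / 2) / Real.sqrt 2 + (21 / 8) * (-s) ^ (-(3 : ℝ))) t
        - ((2 / 3) * ((-t) ^ ((1 : ℝ) / 2) / Real.sqrt 2 - (1 / 8) * (-t) ^ (-(1 : ℝ)))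
             * ((-t) ^ (-(3 : ℝ) / 2) / Real.sqrt 2 + (21 / 8) * (-t) ^ (-(3 : ℝ)))
          + (u' t / u t) *
            ((1 + ((-t) ^ (-(3 : ℝ) / 2) / Real.sqrt 2 + (21 / 8) * (-t) ^ (-(3 : ℝ))))
              * (2 - ((-t) ^ (-(3 : ℝ) / 2) / Real.sqrt 2 + (21 / 8) * (-t) ^ (-(3 : ℝ)))) / 3)))
      =O[atBot] (fun t => (-t) ^ (-(4 : ℝ)))
    ∧
    (fun t =>
        deriv (fun s => (-s) ^ ((1 : ℝ) / 2) / Real.sqrt 2 - (1 / 8) * (-s) ^ (-(1 : ℝ))) t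
        - (((-t) ^ ((1 : ℝ) / 2) / Real.sqrt 2 - (1 / 8) * (-t) ^ (-(1 : ℝ)))
             * ((2 / 3) * ((-t) ^ ((1 : ℝ) / 2) / Real.sqrt 2 - (1 / 8) * (-t) ^ (-(1 : ℝ)))
               + (u' t / u t) *
                 ((2 - ((-t) ^ (-(3 : ℝ) / 2) / Real.sqrt 2 + (21 / 8) * (-t) ^ (-(3 : ℝ)))) / 3))
          - (t / 6) * (1 + ((-t) ^ (-(3 : ℝ) / 2) / Real.sqrt 2 + (21 / 8) * (-t) ^ (-(3 : ℝ))))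
          - ((u t) ^ 2 / 3) *
              (3 + ((-t) ^ (-(3 : ℝ) / 2) / Real.sqrt 2 + (21 / 8) * (-t) ^ (-(3 : ℝ))))))
      =O[atBot] (fun t => (-t) ^ (-(2 : ℝ))) := by
  obtain ⟨heps1, husq⟩ := key u u' hu huODE hupos huasymp
  constructor
  · -- first residual
    have hqB : Bnd (fun t : ℝ =>
        -((1 + ((-t) ^ (-(3:ℝ)/2)/Real.sqrt 2 + (21/8)*(-t)^(-(3:ℝ))))
          * (2 - ((-t) ^ (-(3:ℝ)/2)/Real.sqrt 2 + (21/8)*(-t)^(-(3:ℝ))))/3)) 0 := by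
      refine ⟨10, -1, by norm_num, by norm_num, fun t ht => ?_⟩
      obtain ⟨hq0, hq4⟩ := qhat_bounds ht
      rw [Real.rpow_zero, mul_one]
      rw [abs_le]
      constructor <;> nlinarith
    have hG : Bnd (fun t : ℝ =>
        (811/96)*(-t)^(-(4:ℝ)) + (-(7/16)*Real.sqrt 2)*(-t)^(-(11:ℝ)/2)
        + (-(147/128))*(-t)^(-(7:ℝ))
        + (u' t / u t + ((-t) ^ (-(1:ℝ)/2))^2 / 2) *
          (-((1 + ((-t) ^ (-(3:ℝ)/2)/Real.sqrt 2 + (21/8)*(-t)^(-(3:ℝ))))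
            * (2 - ((-t) ^ (-(3:ℝ)/2)/Real.sqrt 2 + (21/8)*(-t)^(-(3:ℝ))))/3))) (-(4:ℝ)) :=
      (((bnd_monomial (811/96) (-(4:ℝ))).add
        ((bnd_monomial (-(7/16)*Real.sqrt 2) (-(11:ℝ)/2)).mono (by norm_num))).add
        ((bnd_monomial (-(147/128)) (-(7:ℝ))).mono (by norm_num))).add
        ((heps1.mul hqB).cast (by norm_num))
    refine Bnd.isBigO (Bnd.congr (t₁ := -1) (by norm_num) (fun t ht => ?_) hG)
    have hx : (0:ℝ) < -t := by linarith
    rw [HasDerivAt.deriv (hD1 (by linarith : t < 0))]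
    rw [rpow_to_pow hx (-(3:ℝ)/2) 3 (by norm_num), rpow_to_pow hx (-(3:ℝ)) 6 (by norm_num),
      rpow_to_pow hx (-(1:ℝ)) 2 (by norm_num), rpow_to_pow hx (-(5:ℝ)/2) 5 (by norm_num),
      rpow_to_pow hx (-(4:ℝ)) 8 (by norm_num), rpow_to_pow hx (-(11:ℝ)/2) 11 (by norm_num),
      rpow_to_pow hx (-(7:ℝ)) 14 (by norm_num)]
    simp only [div_sqrt_two]
    linear_combination
      ((-1/6:ℝ)*((-t)^(-(1:ℝ)/2))^2*(Real.sqrt 2)^2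
        + (-7/8)*((-t)^(-(1:ℝ)/2))^5*Real.sqrt 2) * (yz hx)
      + ((-1/6:ℝ)*((-t)^(-(1:ℝ)/2))^2 + (-1/24)*((-t)^(-(1:ℝ)/2))^8) * sqrt2_mul_self
  · -- second residual
    have hqB2 : Bnd (fun t : ℝ =>
        -(((-t) ^ ((1:ℝ)/2)/Real.sqrt 2 - (1/8)*(-t)^(-(1:ℝ)))
          * (2 - ((-t) ^ (-(3:ℝ)/2)/Real.sqrt 2 + (21/8)*(-t)^(-(3:ℝ))))/3)) ((1:ℝ)/2) := by
      refine ⟨4, -1, by norm_num, by norm_num, fun t ht => ?_⟩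
      obtain ⟨hq0, hq4⟩ := qhat_bounds ht
      have hx : (0:ℝ) < -t := by linarith
      have h1 : (1:ℝ) ≤ -t := by linarith
      have hz1 : (1:ℝ) ≤ (-t)^((1:ℝ)/2) := Real.one_le_rpow h1 (by norm_num)
      have hz0 : (0:ℝ) ≤ (-t)^((1:ℝ)/2) := by linarith
      have hd1 : (-t)^((1:ℝ)/2)/Real.sqrt 2 ≤ (-t)^((1:ℝ)/2) := div_le_self hz0 sqrt2_ge_one
      have hd0 : (0:ℝ) ≤ (-t)^((1:ℝ)/2)/Real.sqrt 2 := by positivity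
      have hy0 : (0:ℝ) ≤ (-t)^(-(1:ℝ)) := Real.rpow_nonneg hx.le _
      have hy1 : (-t)^(-(1:ℝ)) ≤ 1 := Real.rpow_le_one_of_one_le_of_nonpos h1 (by norm_num)
      rw [abs_le]
      constructor <;> nlinarith
    have hqB3 : Bnd (fun t : ℝ =>
        (3 + ((-t) ^ (-(3:ℝ)/2)/Real.sqrt 2 + (21/8)*(-t)^(-(3:ℝ))))/3) 0 := by
      refine ⟨3, -1, by norm_num, by norm_num, fun t ht => ?_⟩
      obtain ⟨hq0, hq4⟩ := qhat_bounds ht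
      rw [Real.rpow_zero, mul_one, abs_le]
      constructor <;> nlinarith
    have hG : Bnd (fun t : ℝ =>
        (-(37/96))*(-t)^(-(2:ℝ)) + (-(11/48)*Real.sqrt 2)*(-t)^(-(7:ℝ)/2)
        + (-(7/128))*(-t)^(-(5:ℝ))
        + (u' t / u t + ((-t) ^ (-(1:ℝ)/2))^2 / 2) *
          (-(((-t) ^ ((1:ℝ)/2)/Real.sqrt 2 - (1/8)*(-t)^(-(1:ℝ)))
            * (2 - ((-t) ^ (-(3:ℝ)/2)/Real.sqrt 2 + (21/8)*(-t)^(-(3:ℝ))))/3))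
        + ((u t)^2 + t/2 + (1/8)*(-t)^(-(2:ℝ))) *
          ((3 + ((-t) ^ (-(3:ℝ)/2)/Real.sqrt 2 + (21/8)*(-t)^(-(3:ℝ))))/3)) (-(2:ℝ)) :=
      ((((bnd_monomial (-(37/96)) (-(2:ℝ))).add
        ((bnd_monomial (-(11/48)*Real.sqrt 2) (-(7:ℝ)/2)).mono (by norm_num))).add
        ((bnd_monomial (-(7/128)) (-(5:ℝ))).mono (by norm_num))).add
        ((heps1.mul hqB2).mono (by norm_num))).add
        ((husq.mul hqB3).mono (by norm_num))
    refine Bnd.isBigO (Bnd.congr (t₁ := -1) (by norm_num) (fun t ht => ?_) hG)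
    have hx : (0:ℝ) < -t := by linarith
    rw [HasDerivAt.deriv (hD2 (by linarith : t < 0))]
    rw [rpow_to_pow hx (-(3:ℝ)/2) 3 (by norm_num), rpow_to_pow hx (-(3:ℝ)) 6 (by norm_num),
      rpow_to_pow hx (-(1:ℝ)) 2 (by norm_num), rpow_to_pow hx (-(2:ℝ)) 4 (by norm_num),
      rpow_to_pow hx (-(7:ℝ)/2) 7 (by norm_num), rpow_to_pow hx (-(5:ℝ)) 10 (by norm_num)]
    simp only [div_sqrt_two]
    linear_combination
      ((1/4:ℝ)*((-t)^(-(1:ℝ)/2))*Real.sqrt 2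
        + (-1/24)*((-t)^(-(1:ℝ)/2))^4*(Real.sqrt 2)^2
        + (-7/32)*((-t)^(-(1:ℝ)/2))^7*Real.sqrt 2) * (yz hx)
      + ((-1/6:ℝ)*((-t)^((1:ℝ)/2))^2 + (-1/24)*((-t)^(-(1:ℝ)/2))^4) * sqrt2_mul_self
      + (-1/3:ℝ) * (z_sq hx)
end

section
/- Let u be the Hastings–McLeod solution of Painlevé II, satisfying u(t) ~ Ai(t) as t → +∞ and u(t) ~ √(−t/2) as t → −∞, with u(t) > 0 for all t. Then the set {k ∈ ℝ : t + k·u(t)² ≥ 0 for all t ∈ ℝ} is nonempty, bounded below by 2, and has a minimum k₀ > 2. -/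
open Real Filter

private lemma inv_neg_tendsto : Tendsto (fun s : ℝ => (-s)⁻¹) atBot (nhds 0) :=
  tendsto_neg_atBot_atTop.inv_tendsto_atTop

/-- Key lemma: `k = 2` is not admissible. -/
private lemma two_not_mem (u u' : ℝ → ℝ)
    (hu : ∀ t, HasDerivAt u (u' t) t)
    (huODE : ∀ t, HasDerivAt u' (t * u t + 2 * (u t) ^ 3) t)
    (hupos : ∀ t, 0 < u t)
    (hsq : Tendsto (fun t => (u t) ^ 2 * (-t / 2)⁻¹) atBot (nhds 1)) :
    ¬ (∀ t : ℝ, 0 ≤ t + 2 * (u t) ^ 2) := by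
  intro h2
  set w : ℝ → ℝ := fun t => t + 2 * (u t) ^ 2 with hwdef
  set w1 : ℝ → ℝ := fun t => 1 + 4 * (u t * u' t) with hw1def
  have hwnn : ∀ t, 0 ≤ w t := h2
  have hw : ∀ t, HasDerivAt w (w1 t) t := by
    intro t
    have h1 : HasDerivAt (fun s : ℝ => s + 2 * (u s) ^ 2) (1 + 4 * (u t * u' t)) t := by
      have := (hasDerivAt_id t).add (((hu t).pow 2).const_mul 2)
      refine this.congr_deriv ?_
      ring
    exact h1
  have hw2 : ∀ t, HasDerivAt w1 (4 * (u' t) ^ 2 + 4 * (u t) ^ 2 * w t) t := by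
    intro t
    have h1 : HasDerivAt (fun s : ℝ => 1 + 4 * (u s * u' s))
        (4 * (u' t) ^ 2 + 4 * (u t) ^ 2 * (t + 2 * (u t) ^ 2)) t := by
      have := (((hu t).mul (huODE t)).const_mul 4).const_add 1
      refine this.congr_deriv ?_
      ring
    exact h1
  have hw0' : ∀ t : ℝ, t ≠ 0 → -1 + (u t) ^ 2 * (-t / 2)⁻¹ = w t * (-t)⁻¹ := by
    intro t hne
    simp only [hwdef]
    field_simp [hne]
    ring
  have hw0pos : 0 < w 0 := by
    have h := hupos 0
    simp only [hwdef]
    positivity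
  clear_value w w1
  have mono1 : Monotone w1 := by
    refine monotone_of_deriv_nonneg (fun t => (hw2 t).differentiableAt) (fun t => ?_)
    rw [(hw2 t).deriv]
    nlinarith [sq_nonneg (u' t), mul_nonneg (sq_nonneg (u t)) (hwnn t)]
  -- w t / (-t) → 0 at -∞
  have hw0 : Tendsto (fun t => w t * (-t)⁻¹) atBot (nhds 0) := by
    have h : Tendsto (fun t => -1 + (u t) ^ 2 * (-t / 2)⁻¹) atBot (nhds (-1 + 1)) :=
      tendsto_const_nhds.add hsq
    have h0 : (-1 : ℝ) + 1 = 0 := by norm_num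
    rw [h0] at h
    refine h.congr' ?_
    filter_upwards [eventually_le_atBot (-1 : ℝ)] with t ht
    exact hw0' t (by linarith)
  -- w1 is nonnegative everywhere
  have hw1nn : ∀ t, 0 ≤ w1 t := by
    intro t
    have key : ∀ s, s < t → w t - w1 t * (t - s) ≤ w s := by
      intro s hs
      obtain ⟨c, hc, hceq⟩ := exists_hasDerivAt_eq_slope w w1 hs
        (fun x _ => (hw x).continuousAt.continuousWithinAt) (fun x _ => hw x)
      have hmc : w1 c ≤ w1 t := mono1 hc.2.le
      have hts : (0:ℝ) < t - s := by linarith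
      have heq : w t - w s = w1 c * (t - s) := by
        rw [hceq]
        field_simp
      nlinarith [mul_le_mul_of_nonneg_right hmc hts.le]
    have hlim : Tendsto (fun s => w t * (-s)⁻¹ - w1 t * (t * (-s)⁻¹ + 1))
        atBot (nhds (-(w1 t))) := by
      have h1 := (inv_neg_tendsto.const_mul (w t)).sub
        (((inv_neg_tendsto.const_mul t).add_const 1).const_mul (w1 t))
      have h0 : w t * 0 - w1 t * (t * 0 + 1) = -(w1 t) := by ring
      rwa [h0] at h1
    have hle : -(w1 t) ≤ (0:ℝ) := by
      refine le_of_tendsto_of_tendsto hlim hw0 ?_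
      filter_upwards [eventually_le_atBot (min (t - 1) (-1))] with s hs
      have hs1 : s < t := by
        have h := hs.trans (min_le_left (t-1) (-1:ℝ)); linarith
      have hs2 : s ≤ -1 := hs.trans (min_le_right _ _)
      have hsne : s ≠ 0 := by linarith
      have hinvpos : (0:ℝ) ≤ (-s)⁻¹ := by
        apply inv_nonneg.2; linarith
      have hk := key s hs1
      have hmul := mul_le_mul_of_nonneg_right hk hinvpos
      have heq : (w t - w1 t * (t - s)) * (-s)⁻¹
          = w t * (-s)⁻¹ - w1 t * (t * (-s)⁻¹ + 1) := by
        have h1 : (-s) * (-s)⁻¹ = 1 := mul_inv_cancel₀ (neg_ne_zero.mpr hsne)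
        linear_combination (-(w1 t)) * h1
      rw [heq] at hmul
      exact hmul
    linarith
  -- w1 t ≤ w 0 / (-t) for t < 0
  have hw1ub : ∀ t < (0:ℝ), w1 t ≤ w 0 / (-t) := by
    intro t ht
    obtain ⟨c, hc, hceq⟩ := exists_hasDerivAt_eq_slope w w1 ht
      (fun x _ => (hw x).continuousAt.continuousWithinAt) (fun x _ => hw x)
    have h1 : w1 t ≤ w1 c := mono1 hc.1.le
    have hpos : (0:ℝ) < -t := by linarith
    have h2' : w1 c ≤ w 0 / (-t) := by
      rw [hceq, show (0:ℝ) - t = -t by ring]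
      gcongr
      linarith [hwnn t]
    exact h1.trans h2'
  -- eventual upper bound u t ^ 2 ≤ -t
  have hev_ub : ∀ᶠ t in atBot, (u t) ^ 2 ≤ -t := by
    filter_upwards [hsq.eventually (eventually_le_nhds (by norm_num : (1:ℝ) < 2)),
      eventually_le_atBot (-1 : ℝ)] with t h1 ht
    have h2t : (0:ℝ) < -t / 2 := by linarith
    have hne : t ≠ 0 := by linarith
    have hkey : (u t) ^ 2 * (-t/2)⁻¹ * (-t/2) = (u t) ^ 2 := by
      field_simp
    have := mul_le_mul_of_nonneg_right h1 h2t.le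
    rw [hkey] at this
    linarith
  obtain ⟨T₁, hT₁⟩ := eventually_atBot.1 hev_ub
  set T : ℝ := min T₁ (-(2 * w 0 + 1)) with hTdef
  have hTlt : T < 0 := by
    have h1 : T ≤ -(2 * w 0 + 1) := min_le_right _ _
    linarith
  -- on (-∞, T], derivative of w1 is at least (1/16) * (-t)⁻¹
  have hderiv_lb : ∀ t ≤ T, (1/16) * (-t)⁻¹ ≤ 4 * (u' t) ^ 2 + 4 * (u t) ^ 2 * w t := by
    intro t htT
    have htneg : t < 0 := lt_of_le_of_lt htT hTlt
    have hpos : (0:ℝ) < -t := by linarith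
    have hne : (-t : ℝ) ≠ 0 := by linarith
    have hub : (u t) ^ 2 ≤ -t := hT₁ t (htT.trans (min_le_left _ _))
    have hle2w : t ≤ -(2 * w 0 + 1) := htT.trans (min_le_right _ _)
    have hw1le : w1 t ≤ 1/2 := by
      have h := hw1ub t htneg
      have h3 : w 0 / (-t) ≤ 1/2 := by
        rw [div_le_iff₀ hpos]; linarith
      linarith
    have huu' : 4 * (u t * u' t) ≤ -(1/2) := by
      have := hw1def ▸ hw1le
      simp only [hw1def] at hw1le
      linarith
    have huu'2 : (1:ℝ)/64 ≤ (u t * u' t) ^ 2 := by nlinarith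
    have hu2pos : (0:ℝ) < (u t) ^ 2 := pow_pos (hupos t) 2
    have h64 : (1:ℝ)/64 ≤ (u' t) ^ 2 * (-t) := by
      have hh : (u t * u' t) ^ 2 = (u' t) ^ 2 * (u t) ^ 2 := by ring
      rw [hh] at huu'2
      nlinarith [sq_nonneg (u' t)]
    have h16 : (1:ℝ)/16 ≤ 4 * (u' t) ^ 2 * (-t) := by linarith
    have hstep : (1/16) * (-t)⁻¹ ≤ (4 * (u' t) ^ 2 * (-t)) * (-t)⁻¹ :=
      mul_le_mul_of_nonneg_right h16 (inv_nonneg.2 hpos.le)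
    have hcl : (4 * (u' t) ^ 2 * (-t)) * (-t)⁻¹ = 4 * (u' t) ^ 2 := by
      field_simp [show t ≠ 0 by linarith]
    rw [hcl] at hstep
    have hterm : 0 ≤ 4 * (u t) ^ 2 * w t :=
      mul_nonneg (by positivity) (hwnn t)
    linarith
  -- log derivative comparison
  have hGd : ∀ t : ℝ, t < 0 → HasDerivAt (fun s => -(1/16) * Real.log (-s)) (-(1/16) * t⁻¹) t := by
    intro t ht
    have h1 : HasDerivAt (fun s : ℝ => -s) (-1) t := (hasDerivAt_id t).neg
    have h2 := (Real.hasDerivAt_log (by linarith : -t ≠ 0)).comp t h1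
    have h3 := h2.const_mul (-(1/16) : ℝ)
    refine h3.congr_deriv ?_
    rw [inv_neg]; ring
  set D : ℝ → ℝ := fun t => w1 t - (-(1/16) * Real.log (-t)) with hDdef
  have hDd : ∀ t : ℝ, t < 0 →
      HasDerivAt D (4 * (u' t) ^ 2 + 4 * (u t) ^ 2 * w t - (-(1/16) * t⁻¹)) t :=
    fun t ht => (hw2 t).sub (hGd t ht)
  have hDeval : ∀ t : ℝ, D t = w1 t + (1/16) * Real.log (-t) := by
    intro t; simp only [hDdef]; ring
  clear_value D
  have hmonoD : MonotoneOn D (Set.Iic T) := by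
    refine monotoneOn_of_deriv_nonneg (convex_Iic T) ?_ ?_ ?_
    · intro t ht
      exact (hDd t (lt_of_le_of_lt ht hTlt)).continuousAt.continuousWithinAt
    · intro t ht
      rw [interior_Iic] at ht
      exact ((hDd t (lt_trans ht hTlt)).differentiableAt).differentiableWithinAt
    · intro t ht
      rw [interior_Iic] at ht
      have htneg : t < 0 := lt_trans ht hTlt
      rw [(hDd t htneg).deriv]
      have h1 := hderiv_lb t ht.le
      have h2 : -(1/16) * t⁻¹ = (1/16) * (-t)⁻¹ := by
        rw [inv_neg]; ring
      rw [h2]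
      linarith
  -- choose a very negative point to get a contradiction
  set t₀ : ℝ := min T (-Real.exp (16 * (w1 T + (1/16) * Real.log (-T)) + 1)) with ht₀def
  have ht₀T : t₀ ≤ T := min_le_left _ _
  have hexp : Real.exp (16 * (w1 T + (1/16) * Real.log (-T)) + 1) ≤ -t₀ := by
    have h := min_le_right T (-Real.exp (16 * (w1 T + (1/16) * Real.log (-T)) + 1))
    rw [← ht₀def] at h
    linarith
  have hlog : 16 * (w1 T + (1/16) * Real.log (-T)) + 1 ≤ Real.log (-t₀) := by
    have h1 : (0:ℝ) < Real.exp (16 * (w1 T + (1/16) * Real.log (-T)) + 1) := Real.exp_pos _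
    have h := (Real.log_le_log_iff h1 (lt_of_lt_of_le h1 hexp)).2 hexp
    rwa [Real.log_exp] at h
  have hDle : D t₀ ≤ D T := hmonoD ht₀T (le_refl T) ht₀T
  rw [hDeval, hDeval] at hDle
  linarith [hw1nn t₀]

/-- For the Hastings–McLeod solution `u` of Painlevé II, the set
`{k : t + k·u(t)² ≥ 0 for all t}` is nonempty, bounded below by 2, and has a
minimum `k₀ > 2`. -/
theorem stmt4 (u u' Ai : ℝ → ℝ)
    (hu : ∀ t, HasDerivAt u (u' t) t)
    (huODE : ∀ t, HasDerivAt u' (t * u t + 2 * (u t) ^ 3) t)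
    (hupos : ∀ t, 0 < u t)
    (hAi : Tendsto (fun t => Ai t /
        ((2 * Real.sqrt π)⁻¹ * t ^ (-(1 : ℝ) / 4) * Real.exp (-(2 / 3) * t ^ ((3 : ℝ) / 2))))
      atTop (nhds 1))
    (huTop : Tendsto (fun t => u t / Ai t) atTop (nhds 1))
    (huBot : Tendsto (fun t => u t / Real.sqrt (-t / 2)) atBot (nhds 1)) :
    ({k : ℝ | ∀ t : ℝ, 0 ≤ t + k * (u t) ^ 2}).Nonempty ∧
    (∀ k ∈ {k : ℝ | ∀ t : ℝ, 0 ≤ t + k * (u t) ^ 2}, 2 ≤ k) ∧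
    ∃ k₀ : ℝ, IsLeast {k : ℝ | ∀ t : ℝ, 0 ≤ t + k * (u t) ^ 2} k₀ ∧ 2 < k₀ := by
  have hucont : Continuous u :=
    continuous_iff_continuousAt.2 fun t => (hu t).continuousAt
  -- squared limit at -∞
  have hsq : Tendsto (fun t => (u t) ^ 2 * (-t / 2)⁻¹) atBot (nhds 1) := by
    have h := huBot.mul huBot
    rw [one_mul] at h
    refine h.congr' ?_
    filter_upwards [eventually_le_atBot (-1 : ℝ)] with t ht
    have h2 : (0:ℝ) < -t / 2 := by linarith
    rw [div_mul_div_comm, Real.mul_self_sqrt h2.le, ← sq, div_eq_mul_inv]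
  -- eventual lower bound
  have hev_lb : ∀ᶠ t in atBot, -t/4 ≤ (u t) ^ 2 := by
    filter_upwards [hsq.eventually (eventually_ge_nhds (by norm_num : (1:ℝ)/2 < 1)),
      eventually_le_atBot (-1 : ℝ)] with t h1 ht
    have h2 : (0:ℝ) < -t / 2 := by linarith
    have hkey : (u t) ^ 2 * (-t/2)⁻¹ * (-t/2) = (u t) ^ 2 := by
      field_simp [show t ≠ 0 by linarith]
    have := mul_le_mul_of_nonneg_right h1 h2.le
    rw [hkey] at this
    linarith
  obtain ⟨T₀, hT₀⟩ := eventually_atBot.1 hev_lb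
  set T : ℝ := min T₀ (-1) with hTdef
  have hT0 : T ≤ -1 := min_le_right _ _
  -- nonemptiness
  have hne : ({k : ℝ | ∀ t : ℝ, 0 ≤ t + k * (u t) ^ 2}).Nonempty := by
    obtain ⟨x₀, hx₀mem, hx₀⟩ := (isCompact_Icc (a := T) (b := 0)).exists_isMinOn
      ⟨T, le_refl T, by linarith⟩ hucont.continuousOn
    have hx₀pos : 0 < u x₀ := hupos x₀
    refine ⟨max 4 ((-T) / (u x₀) ^ 2), fun t => ?_⟩
    have h4 : (4:ℝ) ≤ max 4 ((-T) / (u x₀) ^ 2) := le_max_left _ _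
    rcases le_total t T with h | h
    · have hlb : -t/4 ≤ (u t) ^ 2 := hT₀ t (h.trans (min_le_left _ _))
      nlinarith [sq_nonneg (u t)]
    · rcases le_total t 0 with h0 | h0
      · have hmin : u x₀ ≤ u t := hx₀ ⟨h, h0⟩
        have h2 : (u x₀) ^ 2 ≤ (u t) ^ 2 := by nlinarith
        have hk : (-T) / (u x₀) ^ 2 ≤ max 4 ((-T) / (u x₀) ^ 2) := le_max_right _ _
        have hkey : (-T) / (u x₀) ^ 2 * (u x₀) ^ 2 = -T := by
          field_simp
        nlinarith [sq_nonneg (u x₀)]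
      · nlinarith [sq_nonneg (u t)]
  -- lower bound 2
  have hlb : ∀ k ∈ {k : ℝ | ∀ t : ℝ, 0 ≤ t + k * (u t) ^ 2}, 2 ≤ k := by
    intro k hk
    have hinv : Tendsto (fun t => 2 * ((u t) ^ 2 * (-t/2)⁻¹)⁻¹) atBot (nhds 2) := by
      have h := hsq.inv₀ one_ne_zero
      have h2 := h.const_mul (2:ℝ)
      have h3 : (2:ℝ) * (1:ℝ)⁻¹ = 2 := by norm_num
      rwa [h3] at h2
    refine le_of_tendsto hinv ?_
    filter_upwards [eventually_le_atBot (-1 : ℝ)] with t ht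
    have h2 : (0:ℝ) < -t / 2 := by linarith
    have hu2 : (0:ℝ) < (u t) ^ 2 := pow_pos (hupos t) 2
    have hkt := hk t
    have hkey : 2 * ((u t) ^ 2 * (-t/2)⁻¹)⁻¹ = (-t) / (u t) ^ 2 := by
      rw [mul_inv, inv_inv]
      field_simp
    rw [hkey, div_le_iff₀ hu2]
    linarith
  refine ⟨hne, hlb, ?_⟩
  -- the set is closed
  have hclosed : IsClosed {k : ℝ | ∀ t : ℝ, 0 ≤ t + k * (u t) ^ 2} := by
    have heq : {k : ℝ | ∀ t : ℝ, 0 ≤ t + k * (u t) ^ 2}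
        = ⋂ t : ℝ, {k : ℝ | 0 ≤ t + k * (u t) ^ 2} := by
      ext k; simp [Set.mem_iInter]
    rw [heq]
    refine isClosed_iInter fun t => isClosed_le continuous_const ?_
    exact continuous_const.add ((continuous_mul_right _))
  have hbdd : BddBelow {k : ℝ | ∀ t : ℝ, 0 ≤ t + k * (u t) ^ 2} := ⟨2, hlb⟩
  have hmem := hclosed.csInf_mem hne hbdd
  refine ⟨sInf _, ⟨hmem, fun b hb => csInf_le hbdd hb⟩, ?_⟩
  have h2le : 2 ≤ sInf {k : ℝ | ∀ t : ℝ, 0 ≤ t + k * (u t) ^ 2} := hlb _ hmem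
  rcases lt_or_eq_of_le h2le with h | h
  · exact h
  · exfalso
    apply two_not_mem u u' hu huODE hupos hsq
    intro t
    have := hmem t
    rw [← h] at this
    exact this
end

section
/- Let M be a real 2×2 matrix with entries m_{ij}, and let a > 0, c > 0, b ∈ ℝ with Δ := b² − 4ac < 0. For a nonzero vector V = (x,y) define |V|² = ax² + bxy + cy². Then the extreme values 𝓜 of the ratio |MV|²/|V|² over nonzero V satisfy the quadratic equation Δ·𝓜² + 2δ·𝓜 + Δ·D² = 0, where D = det M and δ = −b²(m₁₁m₂₂ + m₁₂m₂₁) − 2b(a·m₁₂ − c·m₂₁)(m₁₁ − m₂₂) + 2a²m₁₂² + 2c²m₂₁² + 2ac(m₁₁² + m₂₂²). -/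
lemma quadratic_psd_null (α β γ : ℝ)
    (hpsd : ∀ x y : ℝ, 0 ≤ α*x^2 + β*x*y + γ*y^2)
    (x0 y0 : ℝ) (h0 : (x0, y0) ≠ ((0:ℝ), (0:ℝ)))
    (hz : α*x0^2 + β*x0*y0 + γ*y0^2 = 0) :
    β^2 - 4*α*γ = 0 := by
  have hα : 0 ≤ α := by have := hpsd 1 0; nlinarith
  have hγ : 0 ≤ γ := by have := hpsd 0 1; nlinarith
  rcases eq_or_lt_of_le hα with hα0 | hαpos
  · have hβ : β = 0 := by
      by_contra hβ
      have h1 := hpsd (-(γ+1)/β) 1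
      rw [← hα0] at h1
      have h2 : (0:ℝ)*((-(γ+1)/β))^2 + β*((-(γ+1)/β))*1 + γ*1^2 = -1 := by
        field_simp
        ring
      rw [h2] at h1
      linarith
    rw [hβ, ← hα0]; ring
  · rcases eq_or_ne y0 0 with hy | hy
    · exfalso
      have hx : x0 ≠ 0 := by
        intro hx; exact h0 (by rw [hx, hy])
      rw [hy] at hz
      have : 0 < α*x0^2 := by positivity
      nlinarith
    · have hy2 : 0 < y0^2 := by positivity
      have h1 : β^2 - 4*α*γ ≤ 0 := by nlinarith [hpsd (-β) (2*α)]
      have h2 : 0 ≤ β^2 - 4*α*γ := by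
        nlinarith [sq_nonneg (2*α*x0 + β*y0), mul_pos hαpos hy2]
      linarith



/-- The set of values of the ratio `|MV|²/|V|²` over nonzero vectors `V`, where
`|V|² = ax² + bxy + cy²` and `M` has entries `m11, m12, m21, m22`. -/
def ratioSet (a b c m11 m12 m21 m22 : ℝ) : Set ℝ :=
  {R : ℝ | ∃ x y : ℝ, (x, y) ≠ (0, 0) ∧
    R = (a * (m11 * x + m12 * y) ^ 2 + b * (m11 * x + m12 * y) * (m21 * x + m22 * y)
          + c * (m21 * x + m22 * y) ^ 2) / (a * x ^ 2 + b * x * y + c * y ^ 2)}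

/-- For a positive definite form `|V|² = ax² + bxy + cy²` (`a, c > 0`,
`Δ = b² − 4ac < 0`) and a 2×2 matrix `M`, the minimum and maximum of
`|MV|²/|V|²` over nonzero `V` exist and both satisfy the quadratic
`Δ·𝓜² + 2δ·𝓜 + Δ·D² = 0` with `D = det M` and `δ` as stated. -/
theorem stmt8 (a b c m11 m12 m21 m22 : ℝ)
    (ha : 0 < a) (hc : 0 < c) (hΔ : b ^ 2 - 4 * a * c < 0) :
    ∃ M1 M2 : ℝ,
      IsLeast (ratioSet a b c m11 m12 m21 m22) M1 ∧
      IsGreatest (ratioSet a b c m11 m12 m21 m22) M2 ∧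
      (b ^ 2 - 4 * a * c) * M1 ^ 2
        + 2 * (-b ^ 2 * (m11 * m22 + m12 * m21)
            - 2 * b * (a * m12 - c * m21) * (m11 - m22)
            + 2 * a ^ 2 * m12 ^ 2 + 2 * c ^ 2 * m21 ^ 2
            + 2 * a * c * (m11 ^ 2 + m22 ^ 2)) * M1
        + (b ^ 2 - 4 * a * c) * (m11 * m22 - m12 * m21) ^ 2 = 0 ∧
      (b ^ 2 - 4 * a * c) * M2 ^ 2
        + 2 * (-b ^ 2 * (m11 * m22 + m12 * m21)
            - 2 * b * (a * m12 - c * m21) * (m11 - m22)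
            + 2 * a ^ 2 * m12 ^ 2 + 2 * c ^ 2 * m21 ^ 2
            + 2 * a * c * (m11 ^ 2 + m22 ^ 2)) * M2
        + (b ^ 2 - 4 * a * c) * (m11 * m22 - m12 * m21) ^ 2 = 0 := by
  -- positivity of the denominator form
  have hQpos : ∀ x y : ℝ, (x, y) ≠ ((0:ℝ), (0:ℝ)) → 0 < a*x^2 + b*x*y + c*y^2 := by
    intro x y hxy
    rcases eq_or_ne y 0 with hy | hy
    · have hx : x ≠ 0 := by
        intro hx; exact hxy (by rw [hx, hy])
      subst hy
      have : 0 < x^2 := by positivity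
      nlinarith
    · have hy2 : 0 < y^2 := by positivity
      nlinarith [sq_nonneg (2*a*x + b*y), mul_pos (show (0:ℝ) < 4*a*c - b^2 by linarith) hy2]
  set g : ℝ × ℝ → ℝ := fun v =>
    (a * (m11 * v.1 + m12 * v.2) ^ 2 + b * (m11 * v.1 + m12 * v.2) * (m21 * v.1 + m22 * v.2)
      + c * (m21 * v.1 + m22 * v.2) ^ 2) / (a * v.1 ^ 2 + b * v.1 * v.2 + c * v.2 ^ 2) with hg
  have himg : ratioSet a b c m11 m12 m21 m22 = g '' (Metric.sphere (0:ℝ×ℝ) 1) := by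
    ext R
    constructor
    · rintro ⟨x, y, hxy, rfl⟩
      have hn : ((x, y) : ℝ × ℝ) ≠ 0 := hxy
      have ht : 0 < ‖((x, y) : ℝ × ℝ)‖ := norm_pos_iff.mpr hn
      set t : ℝ := ‖((x, y) : ℝ × ℝ)‖ with hts
      refine ⟨t⁻¹ • (x, y), ?_, ?_⟩
      · rw [mem_sphere_zero_iff_norm, norm_smul, ← hts]
        rw [norm_inv, Real.norm_eq_abs, abs_of_pos ht, inv_mul_cancel₀ ht.ne']
      · have hs : t⁻¹ ≠ 0 := inv_ne_zero ht.ne'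
        have hQ := hQpos x y hxy
        simp only [hg, Prod.smul_fst, Prod.smul_snd, smul_eq_mul]
        have h1 : a * (t⁻¹*x) ^ 2 + b * (t⁻¹*x) * (t⁻¹*y) + c * (t⁻¹*y) ^ 2
            = (t⁻¹)^2 * (a * x ^ 2 + b * x * y + c * y ^ 2) := by ring
        have h2 : a * (m11 * (t⁻¹*x) + m12 * (t⁻¹*y)) ^ 2
            + b * (m11 * (t⁻¹*x) + m12 * (t⁻¹*y)) * (m21 * (t⁻¹*x) + m22 * (t⁻¹*y))
            + c * (m21 * (t⁻¹*x) + m22 * (t⁻¹*y)) ^ 2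
            = (t⁻¹)^2 * (a * (m11 * x + m12 * y) ^ 2
              + b * (m11 * x + m12 * y) * (m21 * x + m22 * y)
              + c * (m21 * x + m22 * y) ^ 2) := by ring
        rw [h1, h2, mul_div_mul_left _ _ (pow_ne_zero 2 hs)]
    · rintro ⟨v, hv, rfl⟩
      have hvn : ‖v‖ = 1 := by simpa using hv
      have hvne : v ≠ 0 := by intro h; rw [h] at hvn; simp at hvn
      refine ⟨v.1, v.2, ?_, rfl⟩
      intro h
      exact hvne (Prod.ext_iff.mpr ⟨by simpa using congrArg Prod.fst h,
        by simpa using congrArg Prod.snd h⟩)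
  have hcont : ContinuousOn g (Metric.sphere (0:ℝ×ℝ) 1) := by
    apply ContinuousOn.div
    · fun_prop
    · fun_prop
    · intro v hv
      have hvn : ‖v‖ = 1 := by simpa using hv
      have hvne : (v.1, v.2) ≠ ((0:ℝ), (0:ℝ)) := by
        intro h
        have : v = 0 := Prod.ext_iff.mpr ⟨by simpa using congrArg Prod.fst h,
          by simpa using congrArg Prod.snd h⟩
        rw [this] at hvn; simp at hvn
      exact (hQpos v.1 v.2 hvne).ne'
  have hne : (Metric.sphere (0:ℝ×ℝ) 1).Nonempty := by
    refine ⟨((1:ℝ), (0:ℝ)), ?_⟩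
    simp [Prod.norm_def]
  have hcomp : IsCompact (g '' (Metric.sphere (0:ℝ×ℝ) 1)) :=
    (isCompact_sphere _ _).image_of_continuousOn hcont
  obtain ⟨M1, hM1⟩ := hcomp.exists_isLeast (hne.image g)
  obtain ⟨M2, hM2⟩ := hcomp.exists_isGreatest (hne.image g)
  rw [← himg] at hM1 hM2
  refine ⟨M1, M2, hM1, hM2, ?_, ?_⟩
  · -- M1 least
    obtain ⟨⟨x0, y0, h0, hM1eq⟩, hlb⟩ := hM1
    have hQ0 := hQpos x0 y0 h0
    have hz : (a*(m11*x0+m12*y0)^2 + b*(m11*x0+m12*y0)*(m21*x0+m22*y0)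
        + c*(m21*x0+m22*y0)^2) = M1 * (a*x0^2+b*x0*y0+c*y0^2) :=
      (div_eq_iff hQ0.ne').mp hM1eq.symm
    have hpsd : ∀ x y : ℝ,
        0 ≤ ((a*m11^2+b*m11*m21+c*m21^2) - M1*a)*x^2
          + ((2*a*m11*m12+b*(m11*m22+m12*m21)+2*c*m21*m22) - M1*b)*x*y
          + ((a*m12^2+b*m12*m22+c*m22^2) - M1*c)*y^2 := by
      intro x y
      rcases eq_or_ne ((x, y) : ℝ × ℝ) ((0:ℝ), (0:ℝ)) with h | h
      · rw [Prod.mk.injEq] at h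
        rw [h.1, h.2]; norm_num
      · have hQ := hQpos x y h
        have hmem : (a*(m11*x+m12*y)^2 + b*(m11*x+m12*y)*(m21*x+m22*y)
            + c*(m21*x+m22*y)^2) / (a*x^2+b*x*y+c*y^2) ∈ ratioSet a b c m11 m12 m21 m22 :=
          ⟨x, y, h, rfl⟩
        have hle := hlb hmem
        have hge : M1 * (a*x^2+b*x*y+c*y^2) ≤ (a*(m11*x+m12*y)^2
            + b*(m11*x+m12*y)*(m21*x+m22*y) + c*(m21*x+m22*y)^2) :=
          (le_div_iff₀ hQ).mp hle
        nlinarith [hge]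
    have hz' : ((a*m11^2+b*m11*m21+c*m21^2) - M1*a)*x0^2
          + ((2*a*m11*m12+b*(m11*m22+m12*m21)+2*c*m21*m22) - M1*b)*x0*y0
          + ((a*m12^2+b*m12*m22+c*m22^2) - M1*c)*y0^2 = 0 := by linarith [hz, sq_nonneg x0]; 
    have key := quadratic_psd_null _ _ _ hpsd x0 y0 h0 hz'
    linear_combination key
  · -- M2 greatest
    obtain ⟨⟨x0, y0, h0, hM2eq⟩, hub⟩ := hM2
    have hQ0 := hQpos x0 y0 h0
    have hz : (a*(m11*x0+m12*y0)^2 + b*(m11*x0+m12*y0)*(m21*x0+m22*y0)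
        + c*(m21*x0+m22*y0)^2) = M2 * (a*x0^2+b*x0*y0+c*y0^2) :=
      (div_eq_iff hQ0.ne').mp hM2eq.symm
    have hpsd : ∀ x y : ℝ,
        0 ≤ (M2*a - (a*m11^2+b*m11*m21+c*m21^2))*x^2
          + (M2*b - (2*a*m11*m12+b*(m11*m22+m12*m21)+2*c*m21*m22))*x*y
          + (M2*c - (a*m12^2+b*m12*m22+c*m22^2))*y^2 := by
      intro x y
      rcases eq_or_ne ((x, y) : ℝ × ℝ) ((0:ℝ), (0:ℝ)) with h | h
      · rw [Prod.mk.injEq] at h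
        rw [h.1, h.2]; norm_num
      · have hQ := hQpos x y h
        have hmem : (a*(m11*x+m12*y)^2 + b*(m11*x+m12*y)*(m21*x+m22*y)
            + c*(m21*x+m22*y)^2) / (a*x^2+b*x*y+c*y^2) ∈ ratioSet a b c m11 m12 m21 m22 :=
          ⟨x, y, h, rfl⟩
        have hle := hub hmem
        have hge : (a*(m11*x+m12*y)^2 + b*(m11*x+m12*y)*(m21*x+m22*y)
            + c*(m21*x+m22*y)^2) ≤ M2 * (a*x^2+b*x*y+c*y^2) :=
          (div_le_iff₀ hQ).mp hle
        nlinarith [hge]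
    have hz' : (M2*a - (a*m11^2+b*m11*m21+c*m21^2))*x0^2
          + (M2*b - (2*a*m11*m12+b*(m11*m22+m12*m21)+2*c*m21*m22))*x0*y0
          + (M2*c - (a*m12^2+b*m12*m22+c*m22^2))*y0^2 = 0 := by linarith [hz]
    have key := quadratic_psd_null _ _ _ hpsd x0 y0 h0 hz'
    linear_combination key
end

section
/- Let f₁₁, f₁₂, f₂₁, f₂₂ : [t₀, t₁] → ℝ be continuous and let (x(t), y(t)) be a solution of the linear system x' = f₁₁x + f₁₂y, y' = f₂₁x + f₂₂y with (x(t₀), y(t₀)) ≠ (0,0). Then, with N(t) = √(x(t)² + y(t)²), for t₁ > t₀: ln N(t₁) ≤ ln N(t₀) + (1/2)∫_{t₀}^{t₁} [f₁₁(s) + f₂₂(s) + √((f₁₁(s)−f₂₂(s))² + (f₁₂(s)+f₂₁(s))²)] ds, and ln N(t₁) ≥ ln N(t₀) + (1/2)∫_{t₀}^{t₁} [f₁₁(s) + f₂₂(s) − √((f₁₁(s)−f₂₂(s))² + (f₁₂(s)+f₂₁(s))²)] ds. -/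
open Real

private lemma key9 (a b c u v : ℝ) :
    |(a - c) * (u ^ 2 - v ^ 2) + b * (2 * u * v)| ≤
      Real.sqrt ((a - c) ^ 2 + b ^ 2) * (u ^ 2 + v ^ 2) := by
  set R := Real.sqrt ((a - c) ^ 2 + b ^ 2) with hRdef
  have hR : 0 ≤ R := Real.sqrt_nonneg _
  have hR2 : R ^ 2 = (a - c) ^ 2 + b ^ 2 := Real.sq_sqrt (by positivity)
  have hRQ : 0 ≤ R * (u ^ 2 + v ^ 2) := mul_nonneg hR (by positivity)
  have hX2 : ((a - c) * (u ^ 2 - v ^ 2) + b * (2 * u * v)) ^ 2 ≤ (R * (u ^ 2 + v ^ 2)) ^ 2 := by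
    rw [mul_pow, hR2]
    nlinarith [sq_nonneg ((a - c) * (2 * u * v) - b * (u ^ 2 - v ^ 2))]
  have := Real.sqrt_le_sqrt hX2
  rwa [Real.sqrt_sq_eq_abs, Real.sqrt_sq_eq_abs, abs_of_nonneg hRQ] at this

/-- Gronwall-type comparison: if `Q' = D` on `[t₀,t₁]` and `D ≤ φ Q`, then
`Q t₁ ≤ Q t₀ * exp (∫ φ)`. -/
private lemma aux9 (t₀ t₁ : ℝ) (h : t₀ < t₁) (Q D φ : ℝ → ℝ)
    (hφ : ContinuousOn φ (Set.Icc t₀ t₁))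
    (hQ : ∀ t ∈ Set.Icc t₀ t₁, HasDerivAt Q (D t) t)
    (hle : ∀ t ∈ Set.Icc t₀ t₁, D t ≤ φ t * Q t) :
    Q t₁ ≤ Q t₀ * Real.exp (∫ s in t₀..t₁, φ s) := by
  set P : ℝ → ℝ := fun t => ∫ s in t₀..t, φ s with hPdef
  have huIcc : Set.uIcc t₀ t₁ = Set.Icc t₀ t₁ := Set.uIcc_of_le h.le
  have hPcont : ContinuousOn P (Set.Icc t₀ t₁) := by
    have := intervalIntegral.continuousOn_primitive_interval
      (μ := MeasureTheory.volume) (f := φ) (a := t₀) (b := t₁)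
      (by rw [huIcc]; exact hφ.integrableOn_compact isCompact_Icc)
    rwa [huIcc] at this
  set G : ℝ → ℝ := fun t => Q t * Real.exp (-(P t)) with hGdef
  have hGcont : ContinuousOn G (Set.Icc t₀ t₁) := by
    have hQc : ContinuousOn Q (Set.Icc t₀ t₁) :=
      fun t ht => (hQ t ht).continuousAt.continuousWithinAt
    exact hQc.mul (Real.continuous_exp.comp_continuousOn hPcont.neg)
  have hG' : ∀ t ∈ Set.Ioo t₀ t₁,
      HasDerivAt G ((D t - φ t * Q t) * Real.exp (-(P t))) t := by
    intro t ht
    have htIcc : t ∈ Set.Icc t₀ t₁ := Set.Ioo_subset_Icc_self ht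
    have hca : ∀ s ∈ Set.Ioo t₀ t₁, ContinuousAt φ s := fun s hs =>
      hφ.continuousAt (Icc_mem_nhds hs.1 hs.2)
    have hint : IntervalIntegrable φ MeasureTheory.volume t₀ t := by
      apply ContinuousOn.intervalIntegrable
      apply hφ.mono
      rw [Set.uIcc_of_le htIcc.1]
      exact Set.Icc_subset_Icc le_rfl htIcc.2
    have hP' : HasDerivAt P (φ t) t :=
      intervalIntegral.integral_hasDerivAt_right hint
        (ContinuousAt.stronglyMeasurableAtFilter isOpen_Ioo hca t ht) (hca t ht)
    have hE : HasDerivAt (fun u => Real.exp (-(P u))) (Real.exp (-(P t)) * (-(φ t))) t :=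
      hP'.neg.exp
    have := (hQ t htIcc).mul hE
    exact this.congr_deriv (by ring)
  have hanti : AntitoneOn G (Set.Icc t₀ t₁) := by
    apply antitoneOn_of_deriv_nonpos (convex_Icc t₀ t₁) hGcont
    · rw [interior_Icc]
      exact fun t ht => (hG' t ht).differentiableAt.differentiableWithinAt
    · rw [interior_Icc]
      intro t ht
      rw [(hG' t ht).deriv]
      have h1 : D t - φ t * Q t ≤ 0 :=
        sub_nonpos.2 (hle t (Set.Ioo_subset_Icc_self ht))
      exact mul_nonpos_of_nonpos_of_nonneg h1 (Real.exp_nonneg _)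
  have hGle : G t₁ ≤ G t₀ :=
    hanti (Set.left_mem_Icc.2 h.le) (Set.right_mem_Icc.2 h.le) h.le
  have hP0 : P t₀ = 0 := intervalIntegral.integral_same
  have h2 : Q t₁ * Real.exp (-(P t₁)) ≤ Q t₀ := by
    simpa [hGdef, hP0] using hGle
  calc Q t₁ = Q t₁ * Real.exp (-(P t₁)) * Real.exp (P t₁) := by
        rw [mul_assoc, ← Real.exp_add, neg_add_cancel, Real.exp_zero, mul_one]
    _ ≤ Q t₀ * Real.exp (P t₁) :=
        mul_le_mul_of_nonneg_right h2 (Real.exp_nonneg _)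

/-- Growth-rate bounds for the Euclidean norm of a solution of a 2×2
time-dependent linear ODE system. -/
theorem stmt9 (t₀ t₁ : ℝ) (h : t₀ < t₁)
    (f11 f12 f21 f22 x y : ℝ → ℝ)
    (hc11 : ContinuousOn f11 (Set.Icc t₀ t₁))
    (hc12 : ContinuousOn f12 (Set.Icc t₀ t₁))
    (hc21 : ContinuousOn f21 (Set.Icc t₀ t₁))
    (hc22 : ContinuousOn f22 (Set.Icc t₀ t₁))
    (hx : ∀ t ∈ Set.Icc t₀ t₁, HasDerivAt x (f11 t * x t + f12 t * y t) t)
    (hy : ∀ t ∈ Set.Icc t₀ t₁, HasDerivAt y (f21 t * x t + f22 t * y t) t)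
    (hnz : (x t₀, y t₀) ≠ (0, 0)) :
    Real.log (Real.sqrt ((x t₁) ^ 2 + (y t₁) ^ 2)) ≤
      Real.log (Real.sqrt ((x t₀) ^ 2 + (y t₀) ^ 2)) +
        (1 / 2) * ∫ s in t₀..t₁,
          (f11 s + f22 s + Real.sqrt ((f11 s - f22 s) ^ 2 + (f12 s + f21 s) ^ 2))
    ∧
    Real.log (Real.sqrt ((x t₀) ^ 2 + (y t₀) ^ 2)) +
        (1 / 2) * ∫ s in t₀..t₁,
          (f11 s + f22 s - Real.sqrt ((f11 s - f22 s) ^ 2 + (f12 s + f21 s) ^ 2)) ≤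
      Real.log (Real.sqrt ((x t₁) ^ 2 + (y t₁) ^ 2)) := by
  have hRcont : ContinuousOn
      (fun s => Real.sqrt ((f11 s - f22 s) ^ 2 + (f12 s + f21 s) ^ 2)) (Set.Icc t₀ t₁) :=
    Real.continuous_sqrt.comp_continuousOn
      (((hc11.sub hc22).pow 2).add ((hc12.add hc21).pow 2))
  have hQD : ∀ t ∈ Set.Icc t₀ t₁, HasDerivAt (fun u => x u ^ 2 + y u ^ 2)
      (2 * (f11 t * x t ^ 2 + (f12 t + f21 t) * (x t * y t) + f22 t * y t ^ 2)) t := by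
    intro t ht
    have := ((hx t ht).pow 2).add ((hy t ht).pow 2)
    exact this.congr_deriv (by push_cast; ring)
  have hkey : ∀ t : ℝ, |(f11 t - f22 t) * (x t ^ 2 - y t ^ 2) +
      (f12 t + f21 t) * (2 * x t * y t)| ≤
      Real.sqrt ((f11 t - f22 t) ^ 2 + (f12 t + f21 t) ^ 2) * (x t ^ 2 + y t ^ 2) := fun t =>
    key9 (f11 t) (f12 t + f21 t) (f22 t) (x t) (y t)
  have hup : x t₁ ^ 2 + y t₁ ^ 2 ≤ (x t₀ ^ 2 + y t₀ ^ 2) * Real.exp (∫ s in t₀..t₁,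
      (f11 s + f22 s + Real.sqrt ((f11 s - f22 s) ^ 2 + (f12 s + f21 s) ^ 2))) := by
    refine aux9 t₀ t₁ h (fun u => x u ^ 2 + y u ^ 2)
      (fun t => 2 * (f11 t * x t ^ 2 + (f12 t + f21 t) * (x t * y t) + f22 t * y t ^ 2))
      _ ((hc11.add hc22).add hRcont) hQD ?_
    intro t ht
    have h1 := (abs_le.1 (hkey t)).2
    beta_reduce
    nlinarith [h1]
  have hlo : (x t₀ ^ 2 + y t₀ ^ 2) * Real.exp (∫ s in t₀..t₁,
      (f11 s + f22 s - Real.sqrt ((f11 s - f22 s) ^ 2 + (f12 s + f21 s) ^ 2)))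
      ≤ x t₁ ^ 2 + y t₁ ^ 2 := by
    have := aux9 t₀ t₁ h (fun u => -(x u ^ 2 + y u ^ 2))
      (fun t => -(2 * (f11 t * x t ^ 2 + (f12 t + f21 t) * (x t * y t) + f22 t * y t ^ 2)))
      (fun s => f11 s + f22 s - Real.sqrt ((f11 s - f22 s) ^ 2 + (f12 s + f21 s) ^ 2))
      ((hc11.add hc22).sub hRcont)
      (fun t ht => (hQD t ht).neg) ?_
    · nlinarith [Real.exp_nonneg (∫ s in t₀..t₁,
        (f11 s + f22 s - Real.sqrt ((f11 s - f22 s) ^ 2 + (f12 s + f21 s) ^ 2)))]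
    · intro t ht
      have h1 := (abs_le.1 (hkey t)).1
      nlinarith [h1]
  have hQ0 : 0 < x t₀ ^ 2 + y t₀ ^ 2 := by
    rcases eq_or_ne (x t₀) 0 with hx0 | hx0
    · rcases eq_or_ne (y t₀) 0 with hy0 | hy0
      · exact absurd (by rw [hx0, hy0]) hnz
      · positivity
    · positivity
  have hQ1 : 0 < x t₁ ^ 2 + y t₁ ^ 2 := lt_of_lt_of_le (by positivity) hlo
  rw [Real.log_sqrt hQ0.le, Real.log_sqrt hQ1.le]
  constructor
  · have hlog := Real.log_le_log hQ1 hup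
    rw [Real.log_mul (ne_of_gt hQ0) (Real.exp_ne_zero _), Real.log_exp] at hlog
    linarith
  · have hlog := Real.log_le_log (by positivity) hlo
    rw [Real.log_mul (ne_of_gt hQ0) (Real.exp_ne_zero _), Real.log_exp] at hlog
    linarith
end

section
/- Let u be the Hastings–McLeod solution of Painlevé II (u > 0 everywhere) and suppose (φ₁, φ₂, φ₀) solves φ₁' = −(2/3)φ₂, φ₂' = −(2/3)u·φ₀ − (1/6)(t + 2u²)·φ₁, φ₀' = (1/3)u'·φ₁ − (2/3)u·φ₂. Let k₀ > 2 be the minimal constant with t + k₀·u(t)² ≥ 0 for all t, and assume k₀ < 10/3. If at some point t₀ we have φ₁(t₀) > 0, φ₂(t₀) > 0, φ₀(t₀) > 0 and (2/3)φ₀(t₀) − ((k₀−2)/6)·u(t₀)·φ₁(t₀) > 0, then φ₁, φ₂, φ₀ and the function (2/3)φ₀ − ((k₀−2)/6)·u·φ₁ are all strictly positive and monotonically decreasing on (−∞, t₀]. -/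
open Set Filter Topology

-- slope sign lemma
lemma slope_pos_right {f : ℝ → ℝ} {x a : ℝ} (hf : HasDerivAt f a x)
    (ha : 0 < a) (hx : f x = 0) : ∀ᶠ t in 𝓝[>] x, 0 < f t := by
  have h := hasDerivAt_iff_tendsto_slope.1 hf
  have h2 : ∀ᶠ t in 𝓝[≠] x, 0 < slope f x t :=
    h.eventually (eventually_gt_nhds ha) |>.mono (fun t ht => by simpa using ht)
  have h3 : 𝓝[>] x ≤ 𝓝[≠] x := nhdsWithin_mono x (fun t ht => ne_of_gt ht)
  filter_upwards [h3 h2, self_mem_nhdsWithin] with t ht ht2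
  have hxt : 0 < t - x := sub_pos.2 ht2
  have : slope f x t = f t / (t - x) := by simp [slope_def_field, hx, div_eq_div_iff]
  rw [this] at ht
  rcases div_pos_iff.1 ht with ⟨h, _⟩ | ⟨_, h⟩
  · exact h
  · linarith

lemma slope_neg_right {f : ℝ → ℝ} {x a : ℝ} (hf : HasDerivAt f a x)
    (ha : a < 0) (hx : f x = 0) : ∀ᶠ t in 𝓝[>] x, f t < 0 := by
  have := slope_pos_right (f := fun t => -f t) (hf.neg) (by linarith) (by simp [hx])
  filter_upwards [this] with t ht; simpa using ht

lemma contOf {f f' : ℝ → ℝ} (h : ∀ t, HasDerivAt f (f' t) t) : Continuous f :=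
  continuous_iff_continuousAt.2 fun t => (h t).continuousAt

lemma strictMonoOnHD {f f' : ℝ → ℝ} (h : ∀ t, HasDerivAt f (f' t) t)
    {D : Set ℝ} (hD : Convex ℝ D) (hpos : ∀ x ∈ interior D, 0 < f' x) : StrictMonoOn f D :=
  strictMonoOn_of_deriv_pos hD (contOf h).continuousOn
    (fun x hx => by rw [(h x).deriv]; exact hpos x hx)

lemma monotoneOnHD {f f' : ℝ → ℝ} (h : ∀ t, HasDerivAt f (f' t) t)
    {D : Set ℝ} (hD : Convex ℝ D) (hpos : ∀ x ∈ interior D, 0 ≤ f' x) : MonotoneOn f D :=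
  monotoneOn_of_deriv_nonneg hD (contOf h).continuousOn
    (fun x _ => (h x).differentiableAt.differentiableWithinAt)
    (fun x hx => by rw [(h x).deriv]; exact hpos x hx)

lemma antitoneOnHD {f f' : ℝ → ℝ} (h : ∀ t, HasDerivAt f (f' t) t)
    {D : Set ℝ} (hD : Convex ℝ D) (hneg : ∀ x ∈ interior D, f' x ≤ 0) : AntitoneOn f D :=
  antitoneOn_of_deriv_nonpos hD (contOf h).continuousOn
    (fun x _ => (h x).differentiableAt.differentiableWithinAt)
    (fun x hx => by rw [(h x).deriv]; exact hneg x hx)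


lemma strictAntiOnHD {f f' : ℝ → ℝ} (h : ∀ t, HasDerivAt f (f' t) t)
    {D : Set ℝ} (hD : Convex ℝ D) (hneg : ∀ x ∈ interior D, f' x < 0) : StrictAntiOn f D :=
  strictAntiOn_of_deriv_neg hD (contOf h).continuousOn
    (fun x hx => by rw [(h x).deriv]; exact hneg x hx)

lemma exists_right_neg (u u' : ℝ → ℝ)
    (hu : ∀ t, HasDerivAt u (u' t) t)
    (huODE : ∀ t, HasDerivAt u' (t * u t + 2 * (u t) ^ 3) t)
    (hupos : ∀ t, 0 < u t) (z : ℝ) : ∃ T, z < T ∧ u' T < 0 := by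
  by_contra hcon
  push_neg at hcon
  set r := max z 0 with hr
  have hrz : z ≤ r := le_max_left _ _
  have hr0 : (0:ℝ) ≤ r := le_max_right _ _
  have hnn : ∀ t, r < t → 0 ≤ u' t := fun t ht => hcon t (lt_of_le_of_lt hrz ht)
  have hu'mono : StrictMonoOn u' (Ici r) := by
    apply strictMonoOnHD huODE (convex_Ici r)
    intro x hx
    rw [interior_Ici, mem_Ioi] at hx
    have hx0 : 0 < x := lt_of_le_of_lt hr0 hx
    have h1 := hupos x
    nlinarith [mul_pos hx0 h1, pow_pos h1 3]
  set δ := u' (r+1) with hδdef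
  have hδ : 0 < δ := by
    have h1 : u' (r + 1/2) < u' (r+1) :=
      hu'mono (mem_Ici.2 (by linarith)) (mem_Ici.2 (by linarith)) (by linarith)
    have h2 : 0 ≤ u' (r + 1/2) := hnn _ (by linarith)
    linarith
  have hu'ge : ∀ t, r+1 ≤ t → δ ≤ u' t := by
    intro t ht
    rcases eq_or_lt_of_le ht with h | h
    · rw [← h]
    · exact le_of_lt (hu'mono (mem_Ici.2 (by linarith)) (mem_Ici.2 (by linarith)) h)
  have humono : MonotoneOn u (Ici r) := by
    apply monotoneOnHD hu (convex_Ici r)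
    intro x hx; rw [interior_Ici, mem_Ioi] at hx; exact hnn x hx
  have hlin : ∀ t, r+1 ≤ t → u (r+1) + δ * (t - (r+1)) ≤ u t := by
    have hg : MonotoneOn (fun t => u t - δ * t) (Ici (r+1)) := by
      apply monotoneOnHD (f' := fun t => u' t - δ)
        (fun t => by have h := (hu t).sub ((hasDerivAt_id' t).const_mul δ); rw [mul_one] at h; exact h)
        (convex_Ici _)
      intro x hx; rw [interior_Ici, mem_Ioi] at hx
      have := hu'ge x (le_of_lt hx); linarith
    intro t ht
    have h2 := hg (mem_Ici.2 le_rfl) (mem_Ici.2 ht) ht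
    simp only at h2
    linarith
  set G := fun t => u' t * u' t - u t * u t * (u t * u t) with hGdef
  have hG : ∀ t, HasDerivAt G (2 * t * u t * u' t) t := by
    intro t
    have h1 := ((huODE t).mul (huODE t)).sub (((hu t).mul (hu t)).mul ((hu t).mul (hu t)))
    exact h1.congr_deriv (by simp only [Pi.mul_apply]; ring)
  have hGmono : MonotoneOn G (Ici (r+1)) := by
    apply monotoneOnHD hG (convex_Ici _)
    intro x hx; rw [interior_Ici, mem_Ioi] at hx
    have hx0 : (0:ℝ) < x := by linarith
    exact mul_nonneg (mul_nonneg (mul_nonneg (by norm_num) hx0.le) (hupos x).le)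
      (hnn x (by linarith))
  set CB := G (r+1) with hCBdef
  clear_value CB
  set M := max 1 (1 - 2*CB) with hMdef
  have hM1 : (1:ℝ) ≤ M := le_max_left _ _
  have hM0 : (0:ℝ) < M := by linarith
  set R := (r+1) + M/δ with hRdef
  clear_value R
  have hRge : r+1 ≤ R := by
    have : 0 ≤ M/δ := le_of_lt (div_pos hM0 hδ)
    linarith
  have huR : M ≤ u R := by
    have h1 := hlin R hRge
    have h2 : δ * (R - (r+1)) = M := by
      rw [hRdef]; field_simp; ring
    have := hupos (r+1)
    rw [h2] at h1
    linarith
  have key : ∀ t, R ≤ t → u t * u t / 2 ≤ u' t := by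
    intro t ht
    have htr : r+1 ≤ t := le_trans hRge ht
    have hut : M ≤ u t :=
      le_trans huR (humono (mem_Ici.2 (by linarith)) (mem_Ici.2 (by linarith)) ht)
    have hG1 : CB ≤ G t := by
      rw [hCBdef]; exact hGmono (mem_Ici.2 le_rfl) (mem_Ici.2 htr) htr
    simp only [hGdef] at hG1
    have h1 : 1 ≤ u t := le_trans (le_max_left _ _) hut
    have h2 : 1 - 2*CB ≤ u t := le_trans (le_max_right _ _) hut
    have h3 : 0 ≤ u' t := hnn t (by linarith)
    have h4 : u t ≤ u t * u t * (u t * u t) := by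
      nlinarith [mul_nonneg (mul_nonneg (hupos t).le (sub_nonneg.2 h1))
        (add_nonneg (add_nonneg (mul_nonneg (hupos t).le (hupos t).le) (hupos t).le) zero_le_one)]
    have h5 : u t * u t * (u t * u t) + CB ≤ u' t * u' t := by linarith
    nlinarith [h5, h4, h2, h3, hupos t]
  have hanti : AntitoneOn (fun s => (u s)⁻¹ + s/2) (Ici R) := by
    apply antitoneOnHD (f' := fun t => -u' t/(u t)^2 + 1/2)
      (fun t => ((hu t).inv (ne_of_gt (hupos t))).add ((hasDerivAt_id' t).div_const 2))
      (convex_Ici _)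
    intro x hx; rw [interior_Ici] at hx
    have hq : 0 < (u x)^2 := pow_pos (hupos x) 2
    have hk := key x (le_of_lt hx)
    have h6 : (1:ℝ)/2 ≤ u' x / (u x)^2 := by
      rw [le_div_iff₀ hq]; nlinarith
    have e : -u' x / (u x) ^2 = -(u' x / (u x)^2) := neg_div _ _
    rw [e]; linarith
  set t2 := R + 2*(u R)⁻¹ + 1 with ht2def
  clear_value t2
  have hiR : 0 < (u R)⁻¹ := inv_pos.2 (hupos R)
  have hit2 : 0 < (u t2)⁻¹ := inv_pos.2 (hupos t2)
  have hle : R ≤ t2 := by rw [ht2def]; linarith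
  have h1 := hanti (mem_Ici.2 le_rfl) (mem_Ici.2 hle) hle
  simp only at h1
  linarith

lemma uder_neg (u u' : ℝ → ℝ) (k₀ : ℝ)
    (hu : ∀ t, HasDerivAt u (u' t) t)
    (huODE : ∀ t, HasDerivAt u' (t * u t + 2 * (u t) ^ 3) t)
    (hupos : ∀ t, 0 < u t)
    (hk : ∀ t : ℝ, 0 ≤ t + k₀ * (u t) ^ 2)
    (hk2 : 2 < k₀) : ∀ t, u' t < 0 := by
  intro z0
  by_contra hcon
  push_neg at hcon
  obtain ⟨T, hzT, hT⟩ := exists_right_neg u u' hu huODE hupos z0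
  have hu'cont : Continuous u' := contOf huODE
  set A := Icc z0 T ∩ u' ⁻¹' (Ici 0) with hAdef
  have hAclosed : IsClosed A := isClosed_Icc.inter (isClosed_Ici.preimage hu'cont)
  have hAne : A.Nonempty := ⟨z0, ⟨le_rfl, hzT.le⟩, hcon⟩
  have hAbdd : BddAbove A := ⟨T, fun x hx => hx.1.2⟩
  set s := sSup A with hsdef
  have hsA : s ∈ A := hAclosed.csSup_mem hAne hAbdd
  have hsz0 : z0 ≤ s := hsA.1.1
  have hsge : 0 ≤ u' s := hsA.2
  have hsT : s < T := by
    rcases lt_or_eq_of_le hsA.1.2 with h | h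
    · exact h
    · exfalso; rw [h] at hsge; linarith
  have hneg : ∀ t, s < t → t ≤ T → u' t < 0 := by
    intro t h1 h2
    by_contra h3
    push_neg at h3
    have htA : t ∈ A := ⟨⟨le_trans hsz0 h1.le, h2⟩, h3⟩
    exact absurd (le_csSup hAbdd htA) (not_le.2 h1)
  have hs0 : u' s = 0 := by
    have hle : u' s ≤ 0 := by
      have htend : Tendsto u' (nhdsWithin s (Ioi s)) (nhds (u' s)) :=
        (hu'cont.continuousAt).continuousWithinAt.tendsto
      have hev : ∀ᶠ t in nhdsWithin s (Ioi s), u' t ≤ 0 := by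
        filter_upwards [Ioc_mem_nhdsGT_of_mem ⟨le_rfl, hsT⟩] with t ht
        exact (hneg t ht.1 ht.2).le
      exact le_of_tendsto htend hev
    linarith
  have hA2 : s + 2 * (u s)^2 ≤ 0 := by
    by_contra h
    push_neg at h
    have hval : 0 < s * u s + 2 * (u s)^3 := by nlinarith [hupos s]
    have hev := slope_pos_right (huODE s) hval hs0
    obtain ⟨c₁, hc₁, hsub⟩ := mem_nhdsGT_iff_exists_Ioc_subset.1 hev
    have hc₁' : s < c₁ := hc₁
    set c₂ := min c₁ T with hc₂def
    have hsc₂ : s < c₂ := lt_min hc₁' hsT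
    have := hsub ⟨hsc₂, min_le_left _ _⟩
    exact absurd this (not_lt.2 (hneg c₂ hsc₂ (min_le_right _ _)).le)
  rcases lt_or_eq_of_le hA2 with hAlt | hAeq
  · -- strict case : u''(s) < 0
    set b := -k₀ * (u s)^2 - 1 with hbdef
    have hbs : b < s := by have := hk s; nlinarith [sq_nonneg (u s)]
    have hub : u s < u b := by
      have h1 := hk b
      rw [hbdef] at h1
      have h2 : (u s)^2 < (u b)^2 := by nlinarith
      have hsum : 0 < u b + u s := by linarith [hupos b, hupos s]
      nlinarith [h2, hsum]
    obtain ⟨c, hcmem, hcmin⟩ :=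
      isCompact_Icc.exists_isMinOn (nonempty_Icc.2 hbs.le) ((contOf hu).continuousOn)
    have hmin := isMinOn_iff.1 hcmin
    have hcs : u c ≤ u s := hmin s (right_mem_Icc.2 hbs.le)
    have hcb : b < c := by
      rcases lt_or_eq_of_le hcmem.1 with h | h
      · exact h
      · exfalso; rw [← h] at hcs; linarith
    by_cases hcz : c = s
    · -- min at right endpoint; u'' < 0 near s gives u increasing just left of s
      have hcont2 : Continuous (fun t => t * u t + 2 * (u t)^3) :=
        (continuous_id.mul (contOf hu)).add (continuous_const.mul ((contOf hu).pow 3))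
      have hO : IsOpen {t : ℝ | t * u t + 2*(u t)^3 < 0} := isOpen_lt hcont2 continuous_const
      have hsO : s ∈ {t : ℝ | t * u t + 2*(u t)^3 < 0} := by
        show s * u s + 2*(u s)^3 < 0
        nlinarith [hupos s]
      obtain ⟨ε, hε, hball⟩ := Metric.isOpen_iff.1 hO s hsO
      set l := max b (s - ε/2) with hldef
      have hls : l < s := max_lt hbs (by linarith)
      have hu'anti : StrictAntiOn u' (Icc l s) := by
        apply strictAntiOnHD huODE (convex_Icc _ _)
        intro x hx; rw [interior_Icc] at hx
        have hxball : x ∈ Metric.ball s ε := by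
          rw [Real.ball_eq_Ioo]
          constructor
          · have h3 : s - ε/2 ≤ l := le_max_right _ _
            have h4 := hx.1; simp only [mem_Ioo] at *
            linarith
          · have h4 := hx.2; linarith
        exact hball hxball
      have humon : StrictMonoOn u (Icc l s) := by
        apply strictMonoOnHD hu (convex_Icc _ _)
        intro x hx; rw [interior_Icc] at hx
        have h1 : u' s < u' x :=
          hu'anti (Ioo_subset_Icc_self hx) (right_mem_Icc.2 hls.le) hx.2
        rw [hs0] at h1; exact h1
      have hlt : u l < u s := humon (left_mem_Icc.2 hls.le) (right_mem_Icc.2 hls.le) hls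
      have h5 : u c ≤ u l := hmin l ⟨le_max_left _ _, hls.le⟩
      rw [hcz] at h5
      linarith
    · have hcs' : c < s := lt_of_le_of_ne hcmem.2 hcz
      have hlocal : IsLocalMin u c := hcmin.isLocalMin (Icc_mem_nhds hcb hcs')
      have hc0 : u' c = 0 := hlocal.hasDerivAt_eq_zero (hu c)
      have hc2 : 0 ≤ c + 2*(u c)^2 := by
        by_contra h
        push_neg at h
        have hval : c * u c + 2*(u c)^3 < 0 := by nlinarith [hupos c]
        have hev := slope_neg_right (huODE c) hval hc0
        obtain ⟨c₁, hc₁, hsub⟩ := mem_nhdsGT_iff_exists_Ioc_subset.1 hev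
        have hc₁' : c < c₁ := hc₁
        set c₂ := min c₁ s with hc₂def
        have hcc₂ : c < c₂ := lt_min hc₁' hcs'
        have hanti : StrictAntiOn u (Icc c c₂) := by
          apply strictAntiOnHD hu (convex_Icc _ _)
          intro x hx; rw [interior_Icc] at hx
          exact hsub ⟨hx.1, le_trans hx.2.le (min_le_left _ _)⟩
        have h5 : u c₂ < u c :=
          hanti (left_mem_Icc.2 hcc₂.le) (right_mem_Icc.2 hcc₂.le) hcc₂
        have h6 : u c ≤ u c₂ :=
          hmin c₂ ⟨le_trans hcb.le hcc₂.le, min_le_right _ _⟩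
        linarith
      have hsum2 : 0 ≤ u s + u c := by linarith [hupos c, hupos s]
      nlinarith [mul_nonneg (sub_nonneg.2 hcs) hsum2]
  · -- equality case : u''(s) = 0, third derivative positive
    have h3 : HasDerivAt (fun t => t * u t + 2 * (u t)^3) (u s) s := by
      have hder := ((hasDerivAt_id' s).mul (hu s)).add (((hu s).pow 3).const_mul 2)
      exact hder.congr_deriv (by rw [hs0]; push_cast; ring)
    have hzero : s * u s + 2 * (u s)^3 = 0 := by nlinarith [hupos s]
    have hev := slope_pos_right h3 (hupos s) hzero
    obtain ⟨c₁, hc₁, hsub⟩ := mem_nhdsGT_iff_exists_Ioc_subset.1 hev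
    have hc₁' : s < c₁ := hc₁
    set c₂ := min c₁ T with hc₂def
    have hsc₂ : s < c₂ := lt_min hc₁' hsT
    have hmono : StrictMonoOn u' (Icc s c₂) := by
      apply strictMonoOnHD huODE (convex_Icc _ _)
      intro x hx; rw [interior_Icc] at hx
      exact hsub ⟨hx.1, le_trans hx.2.le (min_le_left _ _)⟩
    have h5 : u' s < u' c₂ := hmono (left_mem_Icc.2 hsc₂.le) (right_mem_Icc.2 hsc₂.le) hsc₂
    rw [hs0] at h5
    exact absurd h5 (not_lt.2 (hneg c₂ hsc₂ (min_le_right _ _)).le)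


/-- If `(φ₁, φ₂, φ₀)` solves the linear system associated with the
Hastings–McLeod solution `u`, `k₀` is the minimal constant with
`t + k₀u² ≥ 0` (with `2 < k₀ < 10/3`), and all four quantities are positive
at `t₀`, then `φ₁, φ₂, φ₀` and `(2/3)φ₀ − ((k₀−2)/6)uφ₁` are strictly positive
and strictly decreasing on `(−∞, t₀]`. -/
theorem stmt10 (u u' φ₁ φ₂ φ₀ : ℝ → ℝ) (k₀ t₀ : ℝ)
    (hu : ∀ t, HasDerivAt u (u' t) t)
    (huODE : ∀ t, HasDerivAt u' (t * u t + 2 * (u t) ^ 3) t)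
    (hupos : ∀ t, 0 < u t)
    (h1 : ∀ t, HasDerivAt φ₁ (-(2 / 3) * φ₂ t) t)
    (h2 : ∀ t, HasDerivAt φ₂ (-(2 / 3) * u t * φ₀ t - (1 / 6) * (t + 2 * (u t) ^ 2) * φ₁ t) t)
    (h0 : ∀ t, HasDerivAt φ₀ ((1 / 3) * u' t * φ₁ t - (2 / 3) * u t * φ₂ t) t)
    (hk₀ : IsLeast {k : ℝ | ∀ t : ℝ, 0 ≤ t + k * (u t) ^ 2} k₀)
    (hk₀2 : 2 < k₀) (hk₀3 : k₀ < 10 / 3)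
    (hp1 : 0 < φ₁ t₀) (hp2 : 0 < φ₂ t₀) (hp0 : 0 < φ₀ t₀)
    (hpc : 0 < (2 / 3) * φ₀ t₀ - ((k₀ - 2) / 6) * u t₀ * φ₁ t₀) :
    (∀ t ≤ t₀, 0 < φ₁ t ∧ 0 < φ₂ t ∧ 0 < φ₀ t ∧
        0 < (2 / 3) * φ₀ t - ((k₀ - 2) / 6) * u t * φ₁ t) ∧
    StrictAntiOn φ₁ (Set.Iic t₀) ∧ StrictAntiOn φ₂ (Set.Iic t₀) ∧
    StrictAntiOn φ₀ (Set.Iic t₀) ∧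
    StrictAntiOn (fun t => (2 / 3) * φ₀ t - ((k₀ - 2) / 6) * u t * φ₁ t) (Set.Iic t₀) := by
  have hk : ∀ t : ℝ, 0 ≤ t + k₀ * (u t) ^ 2 := hk₀.1
  have uneg : ∀ t, u' t < 0 := uder_neg u u' k₀ hu huODE hupos hk hk₀2
  set ψ := fun t => (2 / 3) * φ₀ t - ((k₀ - 2) / 6) * u t * φ₁ t with hψdef
  have hψd : ∀ t, HasDerivAt ψ ((2 / 3) * ((1 / 3) * u' t * φ₁ t - (2 / 3) * u t * φ₂ t) -
      (((k₀ - 2) / 6) * u' t * φ₁ t + ((k₀ - 2) / 6) * u t * (-(2 / 3) * φ₂ t))) t := by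
    intro t
    exact (HasDerivAt.const_mul (2 / 3) (h0 t)).sub
      ((HasDerivAt.const_mul ((k₀ - 2) / 6) (hu t)).mul (h1 t))
  clear_value ψ
  have hψt₀ : 0 < ψ t₀ := by rw [hψdef]; exact hpc
  -- sign lemmas for the derivatives, given positivity of all four quantities
  have sign1 : ∀ x, 0 < φ₂ x → -(2 / 3) * φ₂ x < 0 := by intro x hx; linarith
  have sign2 : ∀ x, 0 < φ₁ x → 0 < ψ x →
      -(2 / 3) * u x * φ₀ x - (1 / 6) * (x + 2 * (u x) ^ 2) * φ₁ x < 0 := by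
    intro x hx1 hxψ
    have e : -(2 / 3) * u x * φ₀ x - (1 / 6) * (x + 2 * (u x) ^ 2) * φ₁ x
        = -(u x * ψ x) - (1 / 6) * ((x + k₀ * (u x) ^ 2) * φ₁ x) := by
      simp only [hψdef]; ring
    rw [e]
    have t1 : 0 < u x * ψ x := mul_pos (hupos x) hxψ
    have t2 : 0 ≤ (x + k₀ * (u x) ^ 2) * φ₁ x := mul_nonneg (hk x) hx1.le
    linarith
  have sign0 : ∀ x, 0 < φ₁ x → 0 < φ₂ x →
      (1 / 3) * u' x * φ₁ x - (2 / 3) * u x * φ₂ x < 0 := by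
    intro x hx1 hx2
    nlinarith [mul_neg_of_neg_of_pos (uneg x) hx1, mul_pos (hupos x) hx2]
  have signψ : ∀ x, 0 < φ₁ x → 0 < φ₂ x →
      (2 / 3) * ((1 / 3) * u' x * φ₁ x - (2 / 3) * u x * φ₂ x) -
      (((k₀ - 2) / 6) * u' x * φ₁ x + ((k₀ - 2) / 6) * u x * (-(2 / 3) * φ₂ x)) < 0 := by
    intro x hx1 hx2
    have c1 : (0:ℝ) < 10 - 3 * k₀ := by linarith
    have c2 : (0:ℝ) < 6 - k₀ := by linarith
    have P1 : 0 < (10 - 3 * k₀) * (-(u' x * φ₁ x)) :=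
      mul_pos c1 (by nlinarith [mul_neg_of_neg_of_pos (uneg x) hx1])
    have P2 : 0 < (6 - k₀) * (u x * φ₂ x) := mul_pos c2 (mul_pos (hupos x) hx2)
    nlinarith [P1, P2]
  -- backward propagation of positivity
  have key : ∀ t, t ≤ t₀ → 0 < φ₁ t ∧ 0 < φ₂ t ∧ 0 < φ₀ t ∧ 0 < ψ t := by
    intro t ht
    by_contra hcontra
    have hdis : φ₁ t ≤ 0 ∨ φ₂ t ≤ 0 ∨ φ₀ t ≤ 0 ∨ ψ t ≤ 0 := by
      by_contra hd; push_neg at hd; exact hcontra hd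
    set B := Icc t t₀ ∩ {x | φ₁ x ≤ 0 ∨ φ₂ x ≤ 0 ∨ φ₀ x ≤ 0 ∨ ψ x ≤ 0} with hBdef
    have hBclosed : IsClosed B := by
      apply IsClosed.inter isClosed_Icc
      have e : {x : ℝ | φ₁ x ≤ 0 ∨ φ₂ x ≤ 0 ∨ φ₀ x ≤ 0 ∨ ψ x ≤ 0} =
          {x | φ₁ x ≤ 0} ∪ ({x | φ₂ x ≤ 0} ∪ ({x | φ₀ x ≤ 0} ∪ {x | ψ x ≤ 0})) := rfl
      rw [e]
      exact (isClosed_le (contOf h1) continuous_const).union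
        ((isClosed_le (contOf h2) continuous_const).union
          ((isClosed_le (contOf h0) continuous_const).union
            (isClosed_le (contOf hψd) continuous_const)))
    have hBne : B.Nonempty := ⟨t, ⟨le_rfl, ht⟩, hdis⟩
    have hBbdd : BddAbove B := ⟨t₀, fun x hx => hx.1.2⟩
    set s := sSup B with hsdef
    have hsB : s ∈ B := hBclosed.csSup_mem hBne hBbdd
    have hst : t ≤ s := hsB.1.1
    have hst₀ : s ≤ t₀ := hsB.1.2
    have hslt : s < t₀ := by
      rcases lt_or_eq_of_le hst₀ with hlt | heq
      · exact hlt
      · exfalso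
        have hd := hsB.2
        rw [heq] at hd
        rcases hd with h | h | h | h <;> linarith
    have hpos : ∀ x, s < x → x ≤ t₀ → 0 < φ₁ x ∧ 0 < φ₂ x ∧ 0 < φ₀ x ∧ 0 < ψ x := by
      intro x h1x h2x
      by_contra hc
      have hdis2 : φ₁ x ≤ 0 ∨ φ₂ x ≤ 0 ∨ φ₀ x ≤ 0 ∨ ψ x ≤ 0 := by
        by_contra hd; push_neg at hd; exact hc hd
      have hxB : x ∈ B := ⟨⟨le_trans hst h1x.le, h2x⟩, hdis2⟩
      exact absurd (le_csSup hBbdd hxB) (not_le.2 h1x)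
    have hIoo : ∀ x ∈ interior (Icc s t₀), s < x ∧ x ≤ t₀ := by
      intro x hx; rw [interior_Icc] at hx; exact ⟨hx.1, hx.2.le⟩
    have hanti1 : StrictAntiOn φ₁ (Icc s t₀) := by
      apply strictAntiOnHD h1 (convex_Icc _ _)
      intro x hx
      obtain ⟨hx1, hx2⟩ := hIoo x hx
      obtain ⟨p1, p2, p0, pψ⟩ := hpos x hx1 hx2
      exact sign1 x p2
    have hanti2 : StrictAntiOn φ₂ (Icc s t₀) := by
      apply strictAntiOnHD h2 (convex_Icc _ _)
      intro x hx
      obtain ⟨hx1, hx2⟩ := hIoo x hx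
      obtain ⟨p1, p2, p0, pψ⟩ := hpos x hx1 hx2
      exact sign2 x p1 pψ
    have hanti0 : StrictAntiOn φ₀ (Icc s t₀) := by
      apply strictAntiOnHD h0 (convex_Icc _ _)
      intro x hx
      obtain ⟨hx1, hx2⟩ := hIoo x hx
      obtain ⟨p1, p2, p0, pψ⟩ := hpos x hx1 hx2
      exact sign0 x p1 p2
    have hantiψ : StrictAntiOn ψ (Icc s t₀) := by
      apply strictAntiOnHD hψd (convex_Icc _ _)
      intro x hx
      obtain ⟨hx1, hx2⟩ := hIoo x hx
      obtain ⟨p1, p2, p0, pψ⟩ := hpos x hx1 hx2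
      exact signψ x p1 p2
    set m := (s + t₀) / 2 with hmdef
    have hm1 : s < m := by rw [hmdef]; linarith
    have hm2 : m ≤ t₀ := by rw [hmdef]; linarith
    obtain ⟨q1, q2, q0, qψ⟩ := hpos m hm1 hm2
    have hsI : s ∈ Icc s t₀ := left_mem_Icc.2 hst₀
    have hmI : m ∈ Icc s t₀ := ⟨hm1.le, hm2⟩
    have g1 : φ₁ m < φ₁ s := hanti1 hsI hmI hm1
    have g2 : φ₂ m < φ₂ s := hanti2 hsI hmI hm1
    have g0 : φ₀ m < φ₀ s := hanti0 hsI hmI hm1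
    have gψ : ψ m < ψ s := hantiψ hsI hmI hm1
    rcases hsB.2 with h | h | h | h <;> linarith
  refine ⟨fun t ht => ?_, ?_, ?_, ?_, ?_⟩
  · obtain ⟨a, b, c, d⟩ := key t ht
    rw [hψdef] at d
    exact ⟨a, b, c, d⟩
  · apply strictAntiOnHD h1 (convex_Iic t₀)
    intro x hx; rw [interior_Iic] at hx
    obtain ⟨p1, p2, p0, pψ⟩ := key x (le_of_lt hx)
    exact sign1 x p2
  · apply strictAntiOnHD h2 (convex_Iic t₀)
    intro x hx; rw [interior_Iic] at hx
    obtain ⟨p1, p2, p0, pψ⟩ := key x (le_of_lt hx)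
    exact sign2 x p1 pψ
  · apply strictAntiOnHD h0 (convex_Iic t₀)
    intro x hx; rw [interior_Iic] at hx
    obtain ⟨p1, p2, p0, pψ⟩ := key x (le_of_lt hx)
    exact sign0 x p1 p2
  · apply strictAntiOnHD hψd (convex_Iic t₀)
    intro x hx; rw [interior_Iic] at hx
    obtain ⟨p1, p2, p0, pψ⟩ := key x (le_of_lt hx)
    exact signψ x p1 p2
end

section
/- Under the hypotheses of the previous statement, φ₁(t) → +∞, φ₂(t) → +∞, and φ₀(t) → +∞ as t → −∞. Moreover φ₁'(t) = −(2/3)φ₂(t) < 0 and φ₂'(t) < −(1/6)(t + k₀u(t)²)·φ₁(t) ≤ 0 on (−∞, t₀]. -/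
open Filter Set

lemma key_step1 (u u' : ℝ → ℝ)
    (hu : ∀ t, HasDerivAt u (u' t) t)
    (huODE : ∀ t, HasDerivAt u' (t * u t + 2 * (u t) ^ 3) t)
    (hupos : ∀ t, 0 < u t) :
    ∀ b, 0 ≤ b → u' b < 0 := by
  have hcu : Continuous u := by
    have : Differentiable ℝ u := fun t => (hu t).differentiableAt
    exact this.continuous
  have hcu' : Continuous u' := by
    have : Differentiable ℝ u' := fun t => (huODE t).differentiableAt
    exact this.continuous
  intro b hb
  by_contra hcon
  push_neg at hcon
  -- u' is strictly monotone on [0, ∞)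
  have hmono : StrictMonoOn u' (Ici 0) := by
    apply strictMonoOn_of_deriv_pos (convex_Ici 0) hcu'.continuousOn
    intro x hx
    rw [interior_Ici] at hx
    rw [(huODE x).deriv]
    have h1 := hupos x
    nlinarith [pow_pos (hupos x) 3, mem_Ioi.mp hx]
  set b1 := b + 1 with hb1
  have hbb1 : b < b1 := by simp [hb1]
  have hb1pos : (0:ℝ) < b1 := by linarith
  set δ := u' b1 with hδdef
  have hδ : 0 < δ := lt_of_le_of_lt hcon (hmono (mem_Ici.2 hb) (mem_Ici.2 (by linarith)) hbb1)
  have hu'ge : ∀ t, b1 ≤ t → δ ≤ u' t := by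
    intro t ht
    exact hmono.monotoneOn (mem_Ici.2 (by linarith)) (mem_Ici.2 (by linarith)) ht
  -- u grows at least linearly on [b1, ∞)
  have hgd : ∀ x, HasDerivAt (fun t => u t - δ * t) (u' x - δ) x := by
    intro x
    exact ((hu x).sub ((hasDerivAt_id' x).const_mul δ)).congr_deriv (by ring)
  have hgmono : MonotoneOn (fun t => u t - δ * t) (Ici b1) := by
    apply monotoneOn_of_deriv_nonneg (convex_Ici b1)
      (Continuous.continuousOn (by continuity))
      (fun x _ => (hgd x).differentiableAt.differentiableWithinAt)
    intro x hx
    rw [interior_Ici] at hx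
    rw [(hgd x).deriv]
    linarith [hu'ge x (le_of_lt hx)]
  have hulin : ∀ t, b1 ≤ t → u b1 + δ * (t - b1) ≤ u t := by
    intro t ht
    have := hgmono (mem_Ici.2 le_rfl) (mem_Ici.2 ht) ht
    simp only at this
    nlinarith
  -- h := u'^2 - u^4 monotone on [b1, ∞)
  set h : ℝ → ℝ := fun t => (u' t) ^ 2 - (u t) ^ 4 with hhdef
  have hhd : ∀ x, HasDerivAt h (2 * u' x * (x * u x + 2 * (u x) ^ 3) - 4 * (u x) ^ 3 * u' x) x := by
    intro x
    have h1 : HasDerivAt (fun t => (u' t) ^ 2) (2 * u' x ^ 1 * (x * u x + 2 * (u x) ^ 3)) x := by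
      exact ((huODE x).pow 2).congr_deriv (by norm_num)
    have h2 : HasDerivAt (fun t => (u t) ^ 4) (4 * u x ^ 3 * u' x) x := by
      exact ((hu x).pow 4).congr_deriv (by norm_num)
    exact (h1.sub h2).congr_deriv (by ring)
  have hhmono : MonotoneOn h (Ici b1) := by
    apply monotoneOn_of_deriv_nonneg (convex_Ici b1)
      (Continuous.continuousOn (by continuity))
      (fun x _ => (hhd x).differentiableAt.differentiableWithinAt)
    intro x hx
    rw [interior_Ici] at hx
    rw [(hhd x).deriv]
    have hx1 : b1 < x := hx
    have h1 : δ ≤ u' x := hu'ge x hx1.le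
    have h2 : 0 < u x := hupos x
    have : 2 * u' x * (x * u x + 2 * (u x) ^ 3) - 4 * (u x) ^ 3 * u' x
        = 2 * x * u x * u' x := by ring
    rw [this]
    have hx0 : 0 < x := lt_trans hb1pos hx1
    have h3 : 0 < u' x := lt_of_lt_of_le hδ h1
    positivity
  -- choose M large enough
  set M : ℝ := 1 + max 0 (-2 * h b1) with hMdef
  have hM1 : (1:ℝ) ≤ M := by
    have := le_max_left (0:ℝ) (-2 * h b1)
    simp only [hMdef]; linarith
  have hM4 : -2 * h b1 ≤ M ^ 4 := by
    have h1 : -2 * h b1 ≤ M := by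
      have := le_max_right (0:ℝ) (-2 * h b1); simp only [hMdef]; linarith
    have h2 : M ≤ M ^ 4 := le_self_pow₀ hM1 (by norm_num)
    linarith
  set T : ℝ := b1 + max 0 ((M - u b1) / δ) with hTdef
  have hTb1 : b1 ≤ T := by
    have := le_max_left (0:ℝ) ((M - u b1) / δ); simp only [hTdef]; linarith
  have huT : ∀ t, T ≤ t → M ≤ u t := by
    intro t ht
    have hb1t : b1 ≤ t := le_trans hTb1 ht
    have hl := hulin t hb1t
    rcases le_total M (u b1) with hc | hc
    · nlinarith [mul_nonneg hδ.le (by linarith : (0:ℝ) ≤ t - b1)]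
    · have hmax : (M - u b1) / δ ≤ max 0 ((M - u b1) / δ) := le_max_right _ _
      have hmt : max 0 ((M - u b1) / δ) ≤ t - b1 := by
        simp only [hTdef] at ht; linarith
      have : M - u b1 ≤ δ * (t - b1) := by
        rw [div_le_iff₀ hδ] at hmax
        nlinarith [hmax, hmt]
      linarith
  -- for t ≥ T : u' t ≥ u t ^ 2 / 2
  have hkey : ∀ t, T ≤ t → u t ^ 2 / 2 ≤ u' t := by
    intro t ht
    have hb1t : b1 ≤ t := le_trans hTb1 ht
    have hh := hhmono (mem_Ici.2 le_rfl) (mem_Ici.2 hb1t) hb1t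
    -- h b1 ≤ h t
    have hut : M ≤ u t := huT t ht
    have hu4 : M ^ 4 ≤ u t ^ 4 := by
      have h0 : (0:ℝ) ≤ M := by linarith
      exact pow_le_pow_left₀ h0 hut 4
    have hu'pos : 0 < u' t := lt_of_lt_of_le hδ (hu'ge t hb1t)
    have hsq : u t ^ 4 / 2 ≤ u' t ^ 2 := by
      have e1 : h t = u' t ^ 2 - u t ^ 4 := rfl
      have e2 : h b1 = u' b1 ^ 2 - u b1 ^ 4 := rfl
      linarith [hh, hM4, hu4]
    nlinarith [hupos t, sq_nonneg (u' t - u t ^ 2 / 2), sq_nonneg (u' t + u t ^ 2 / 2)]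
  -- F := -(1/u) - t/2 is monotone on [T,∞), contradiction with F < 0
  have hFd : ∀ x, HasDerivAt (fun t => -(u t)⁻¹ - t / 2) (u' x / (u x) ^ 2 - 1 / 2) x := by
    intro x
    have h1 : HasDerivAt (fun t => (u t)⁻¹) (-(u' x) / (u x) ^ 2) x := (hu x).inv (hupos x).ne'
    have h2 : HasDerivAt (fun t => t / 2) ((1:ℝ) / 2) x := by
      simpa using (hasDerivAt_id x).div_const 2
    have := h1.neg.sub h2
    exact this.congr_deriv (by ring)
  have hFmono : MonotoneOn (fun t => -(u t)⁻¹ - t / 2) (Ici T) := by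
    apply monotoneOn_of_deriv_nonneg (convex_Ici T)
      (Continuous.continuousOn (by fun_prop (disch := intro x; exact (hupos x).ne')))
      (fun x _ => (hFd x).differentiableAt.differentiableWithinAt)
    intro x hx
    rw [interior_Ici] at hx
    rw [(hFd x).deriv]
    have hk := hkey x (le_of_lt hx)
    have hu2 : 0 < u x ^ 2 := pow_pos (hupos x) 2
    have h3 : u x ^ 2 / 2 / u x ^ 2 ≤ u' x / u x ^ 2 :=
      div_le_div_of_nonneg_right hk hu2.le
    have h4 : u x ^ 2 / 2 / u x ^ 2 = 1 / 2 := by rw [div_right_comm, div_self hu2.ne']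
    linarith
  set t2 : ℝ := T + 2 * ((u T)⁻¹ + 1) with ht2def
  have hTt2 : T ≤ t2 := by
    have : 0 < (u T)⁻¹ := inv_pos.2 (hupos T)
    simp only [ht2def]; linarith
  have := hFmono (mem_Ici.2 le_rfl) (mem_Ici.2 hTt2) hTt2
  simp only at this
  have hinvT : 0 < (u T)⁻¹ := inv_pos.2 (hupos T)
  have hinvt : 0 < (u t2)⁻¹ := inv_pos.2 (hupos t2)
  simp only [ht2def] at this
  linarith

lemma key_step2 (u u' : ℝ → ℝ) (k₀ : ℝ) (hk : 0 < k₀)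
    (hu : ∀ t, HasDerivAt u (u' t) t)
    (huODE : ∀ t, HasDerivAt u' (t * u t + 2 * (u t) ^ 3) t)
    (hupos : ∀ t, 0 < u t)
    (hlow : ∀ t, 0 ≤ t + k₀ * (u t) ^ 2) :
    ∀ a, u' a ≤ 0 := by
  have hcu : Continuous u := by
    have : Differentiable ℝ u := fun t => (hu t).differentiableAt
    exact this.continuous
  have hcu' : Continuous u' := by
    have : Differentiable ℝ u' := fun t => (huODE t).differentiableAt
    exact this.continuous
  have hstep1 := key_step1 u u' hu huODE hupos
  intro a
  by_contra hcon
  push_neg at hcon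
  have ha0 : a < 0 := by
    by_contra hge
    push_neg at hge
    exact absurd hcon (not_lt.2 (hstep1 a hge).le)
  -- the set of zeros of u' in [a,0]
  have hu'0 : u' 0 < 0 := hstep1 0 le_rfl
  set Z : Set ℝ := Icc a 0 ∩ u' ⁻¹' {0} with hZdef
  have hZne : Z.Nonempty := by
    have himage : (0:ℝ) ∈ u' '' Icc a 0 := by
      apply intermediate_value_Icc' ha0.le hcu'.continuousOn
      exact ⟨hu'0.le, hcon.le⟩
    obtain ⟨z, hz, hz0⟩ := himage
    exact ⟨z, hz, hz0⟩
  have hZclosed : IsClosed Z := (isClosed_Icc.inter (isClosed_singleton.preimage hcu'))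
  have hZbdd : BddBelow Z := ⟨a, fun z hz => hz.1.1⟩
  set a' : ℝ := sInf Z with ha'def
  have ha'Z : a' ∈ Z := hZclosed.csInf_mem hZne hZbdd
  have ha'0 : u' a' = 0 := ha'Z.2
  have haa' : a < a' := by
    rcases lt_or_eq_of_le ha'Z.1.1 with h | h
    · exact h
    · exfalso; rw [← h] at ha'0; linarith
  -- u' > 0 on [a, a')
  have hpos2 : ∀ t ∈ Ico a a', 0 < u' t := by
    rintro t ⟨hat, hta⟩
    by_contra hle
    push_neg at hle
    have himage : (0:ℝ) ∈ u' '' Icc a t := by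
      apply intermediate_value_Icc' hat hcu'.continuousOn
      exact ⟨hle, hcon.le⟩
    obtain ⟨z, hz, hz0⟩ := himage
    have hzZ : z ∈ Z := ⟨⟨hz.1, le_trans hz.2 (le_trans hta.le (ha'Z.1.2))⟩, hz0⟩
    have : a' ≤ z := csInf_le hZbdd hzZ
    linarith [hz.2, hta]
  -- the set of points ≤ a where u' ≤ 0
  set W : Set ℝ := {t | t ≤ a ∧ u' t ≤ 0} with hWdef
  by_cases hWne : W.Nonempty
  · -- b := sup W ; u' b = 0, u' > 0 on (b, a']
    have hWclosed : IsClosed W := by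
      have he : W = Iic a ∩ u' ⁻¹' Iic 0 := by ext t; simp [hWdef]
      rw [he]
      exact isClosed_Iic.inter (isClosed_Iic.preimage hcu')
    have hWbdd : BddAbove W := ⟨a, fun t ht => ht.1⟩
    set b : ℝ := sSup W with hbdef
    have hbW : b ∈ W := hWclosed.csSup_mem hWne hWbdd
    have hba : b < a := by
      rcases lt_or_eq_of_le hbW.1 with h | h
      · exact h
      · exfalso; rw [h] at hbW; linarith [hbW.2]
    have hbpos : ∀ t ∈ Ioc b a, 0 < u' t := by
      rintro t ⟨hbt, hta⟩
      by_contra hle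
      push_neg at hle
      have : t ∈ W := ⟨hta, hle⟩
      linarith [le_csSup hWbdd this]
    have hub0 : u' b = 0 := by
      refine le_antisymm hbW.2 ?_
      have htend : Tendsto u' (nhdsWithin b (Ioi b)) (nhds (u' b)) :=
        (hcu'.tendsto b).mono_left nhdsWithin_le_nhds
      refine ge_of_tendsto htend ?_
      filter_upwards [Ioc_mem_nhdsGT_of_mem ⟨le_rfl, hba⟩] with t ht
      exact (hbpos t ht).le
    -- u' > 0 on (b, a')
    have hppp : ∀ t ∈ Ioo b a', 0 < u' t := by
      rintro t ⟨hbt, hta'⟩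
      rcases le_or_gt t a with h | h
      · exact hbpos t ⟨hbt, h⟩
      · exact hpos2 t ⟨h.le, hta'⟩
    -- u strictly monotone on [b, a']
    have hba' : b < a' := lt_trans hba haa'
    have humono : StrictMonoOn u (Icc b a') := by
      apply strictMonoOn_of_deriv_pos (convex_Icc b a') hcu.continuousOn
      intro x hx
      rw [interior_Icc] at hx
      rw [(hu x).deriv]
      exact hppp x hx
    have hua : u b < u a' := humono ⟨le_rfl, hba'.le⟩ ⟨hba'.le, le_rfl⟩ hba'
    -- second derivative signs at b and a'
    have hwb : 0 ≤ b * u b + 2 * (u b) ^ 3 := by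
      have hder : HasDerivWithinAt u' (b * u b + 2 * (u b) ^ 3) (Ioi b) b :=
        (huODE b).hasDerivWithinAt
      rw [hasDerivWithinAt_iff_tendsto_slope] at hder
      rw [show Ioi b \ {b} = Ioi b from diff_singleton_eq_self (notMem_Ioi.2 le_rfl)] at hder
      refine ge_of_tendsto hder ?_
      filter_upwards [Ioc_mem_nhdsGT_of_mem ⟨le_rfl, hba⟩] with t ht
      rw [slope_def_field, hub0]
      have h1 : 0 < u' t := hbpos t ht
      have h2 : b < t := ht.1
      apply div_nonneg (by linarith) (by linarith)
    have hwa' : a' * u a' + 2 * (u a') ^ 3 ≤ 0 := by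
      have hder : HasDerivWithinAt u' (a' * u a' + 2 * (u a') ^ 3) (Iio a') a' :=
        (huODE a').hasDerivWithinAt
      rw [hasDerivWithinAt_iff_tendsto_slope] at hder
      rw [show Iio a' \ {a'} = Iio a' from diff_singleton_eq_self (notMem_Iio.2 le_rfl)] at hder
      refine le_of_tendsto hder ?_
      filter_upwards [Ioo_mem_nhdsLT_of_mem (show a' ∈ Ioc b a' from ⟨hba', le_rfl⟩)] with t ht
      rw [slope_def_field, ha'0]
      have h1 : 0 < u' t := hppp t ht
      have h2 : t < a' := ht.2
      apply div_nonpos_of_nonneg_of_nonpos (by linarith) (by linarith)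
    -- so u b ^ 2 ≥ -b/2 > -a'/2 ≥ u a' ^ 2, contradicting u b < u a'
    have hb2 : 0 ≤ b + 2 * (u b) ^ 2 := by nlinarith [hupos b]
    have ha2 : a' + 2 * (u a') ^ 2 ≤ 0 := by nlinarith [hupos a']
    nlinarith [hupos b, hupos a', hua, hba']
  · -- u' > 0 on all of (-∞, a] : contradiction with u unbounded
    have hWpos : ∀ t ≤ a, 0 < u' t := by
      intro t ht
      by_contra hle
      push_neg at hle
      exact hWne ⟨t, ht, hle⟩
    have humono : StrictMonoOn u (Iic a) := by
      apply strictMonoOn_of_deriv_pos (convex_Iic a) hcu.continuousOn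
      intro x hx
      rw [interior_Iic] at hx
      rw [(hu x).deriv]
      exact hWpos x (le_of_lt hx)
    set t1 : ℝ := min (a - 1) (-k₀ * (u a + 1) ^ 2) with ht1def
    have ht1a : t1 < a := lt_of_le_of_lt (min_le_left _ _) (by linarith)
    have hlt : u t1 < u a := humono (mem_Iic.2 ht1a.le) (mem_Iic.2 le_rfl) ht1a
    have hbig : (u a + 1) ^ 2 ≤ (u t1) ^ 2 := by
      have h1 := hlow t1
      have h2 : t1 ≤ -k₀ * (u a + 1) ^ 2 := min_le_right _ _
      nlinarith
    have hua1 : 0 < u a + 1 := by linarith [hupos a]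
    nlinarith [hupos t1]

lemma key_uneg (u u' : ℝ → ℝ) (k₀ : ℝ) (hk : 0 < k₀)
    (hu : ∀ t, HasDerivAt u (u' t) t)
    (huODE : ∀ t, HasDerivAt u' (t * u t + 2 * (u t) ^ 3) t)
    (hupos : ∀ t, 0 < u t)
    (hlow : ∀ t, 0 ≤ t + k₀ * (u t) ^ 2) :
    ∀ t, u' t < 0 := by
  have hcu : Continuous u := by
    have : Differentiable ℝ u := fun t => (hu t).differentiableAt
    exact this.continuous
  have hcu' : Continuous u' := by
    have : Differentiable ℝ u' := fun t => (huODE t).differentiableAt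
    exact this.continuous
  have hstep2 := key_step2 u u' k₀ hk hu huODE hupos hlow
  intro a
  rcases lt_or_eq_of_le (hstep2 a) with h | heq
  · exact h
  exfalso
  -- u' a = 0 is a local max of u', so u''(a) = 0
  have hmax : IsLocalMax u' a := Filter.Eventually.of_forall fun t => by
    rw [heq]; exact hstep2 t
  have hw0 : a * u a + 2 * (u a) ^ 3 = 0 := hmax.hasDerivAt_eq_zero (huODE a)
  -- w := u'' has derivative u a > 0 at a
  set w : ℝ → ℝ := fun t => t * u t + 2 * (u t) ^ 3 with hwdef
  have hwd : ∀ x, HasDerivAt w (u x + x * u' x + 6 * (u x) ^ 2 * u' x) x := by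
    intro x
    have hh1 : HasDerivAt (fun t : ℝ => t * u t) (1 * u x + x * u' x) x :=
      (hasDerivAt_id x).mul (hu x)
    have hh2 : HasDerivAt (fun t => 2 * (u t) ^ 3) (2 * (3 * (u x) ^ 2 * u' x)) x := by
      simpa using ((hu x).pow 3).const_mul 2
    have := hh1.add hh2
    exact this.congr_deriv (by ring)
  have hwa : HasDerivAt w (u a) a := by
    have := hwd a
    rw [heq] at this
    simpa using this
  rw [hasDerivAt_iff_tendsto_slope] at hwa
  have hleft : Tendsto (slope w a) (nhdsWithin a (Iio a)) (nhds (u a)) :=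
    hwa.mono_left (nhdsWithin_mono a fun x hx => ne_of_lt hx)
  have hev : ∀ᶠ t in nhdsWithin a (Iio a), w t < 0 := by
    have h1 : ∀ᶠ t in nhdsWithin a (Iio a), 0 < slope w a t :=
      hleft.eventually (eventually_gt_nhds (hupos a))
    filter_upwards [h1, self_mem_nhdsWithin] with t ht ht2
    have hwa0 : w a = 0 := hw0
    rw [slope_def_field, hwa0] at ht
    by_contra hge
    push_neg at hge
    have : (w t - 0) / (t - a) ≤ 0 :=
      div_nonpos_of_nonneg_of_nonpos (by linarith) (by linarith [mem_Iio.1 ht2])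
    linarith
  rw [eventually_iff, mem_nhdsLT_iff_exists_Ioo_subset] at hev
  obtain ⟨l, hl, hsub⟩ := hev
  have hla : l < a := hl
  set c : ℝ := (l + a) / 2 with hcdef
  have hcl : l < c := by simp only [hcdef]; linarith
  have hca : c < a := by simp only [hcdef]; linarith
  have hanti : StrictAntiOn u' (Icc c a) := by
    apply strictAntiOn_of_deriv_neg (convex_Icc c a) hcu'.continuousOn
    intro x hx
    rw [interior_Icc] at hx
    rw [(huODE x).deriv]
    exact hsub ⟨lt_trans hcl hx.1, hx.2⟩
  have : u' a < u' c := hanti ⟨le_rfl, hca.le⟩ ⟨hca.le, le_rfl⟩ hca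
  rw [heq] at this
  linarith [hstep2 c]

lemma tendsto_of_deriv_le_neg (f f' : ℝ → ℝ) (T c : ℝ)
    (hf : ∀ x, HasDerivAt f (f' x) x) (hc : 0 < c)
    (hb : ∀ x ≤ T, f' x ≤ -c) : Tendsto f atBot atTop := by
  have hfc : Continuous f := by
    have : Differentiable ℝ f := fun t => (hf t).differentiableAt
    exact this.continuous
  have hg : ∀ x, HasDerivAt (fun t => f t + c * t) (f' x + c) x := fun x => by
    exact ((hf x).add ((hasDerivAt_id' x).const_mul c)).congr_deriv (by ring)
  have hanti : AntitoneOn (fun t => f t + c * t) (Iic T) := by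
    apply antitoneOn_of_deriv_nonpos (convex_Iic T)
      ((hfc.add (continuous_const.mul continuous_id')).continuousOn)
      (fun x _ => (hg x).differentiableAt.differentiableWithinAt)
    intro x hx
    rw [interior_Iic] at hx
    rw [show deriv (f + (fun x => c) * fun x => x) x = f' x + c from (hg x).deriv]
    linarith [hb x (le_of_lt hx)]
  have hge : ∀ t ≤ T, f T + c * T - c * t ≤ f t := by
    intro t ht
    have := hanti (mem_Iic.2 ht) (mem_Iic.2 le_rfl) ht
    simp only at this; linarith
  have hlin : Tendsto (fun t : ℝ => f T + c * T - c * t) atBot atTop := by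
    have h1 : Tendsto (fun t : ℝ => -t) atBot atTop := tendsto_neg_atBot_atTop
    have h2 : Tendsto (fun t : ℝ => c * -t) atBot atTop := h1.const_mul_atTop hc
    have h3 : Tendsto (fun t : ℝ => f T + c * T + c * -t) atBot atTop :=
      tendsto_atTop_add_const_left _ _ h2
    refine h3.congr fun t => by ring
  apply tendsto_atTop_mono' atBot _ hlin
  filter_upwards [eventually_le_atBot T] with t ht
  exact hge t ht

/-- Under the hypotheses of the previous statement, `φ₁, φ₂, φ₀ → +∞` as
`t → −∞`; moreover `φ₁' = −(2/3)φ₂ < 0` and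
`φ₂' < −(1/6)(t + k₀u²)φ₁ ≤ 0` on `(−∞, t₀]`. -/
theorem stmt11 (u u' φ₁ φ₂ φ₀ : ℝ → ℝ) (k₀ t₀ : ℝ)
    (hu : ∀ t, HasDerivAt u (u' t) t)
    (huODE : ∀ t, HasDerivAt u' (t * u t + 2 * (u t) ^ 3) t)
    (hupos : ∀ t, 0 < u t)
    (h1 : ∀ t, HasDerivAt φ₁ (-(2 / 3) * φ₂ t) t)
    (h2 : ∀ t, HasDerivAt φ₂ (-(2 / 3) * u t * φ₀ t - (1 / 6) * (t + 2 * (u t) ^ 2) * φ₁ t) t)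
    (h0 : ∀ t, HasDerivAt φ₀ ((1 / 3) * u' t * φ₁ t - (2 / 3) * u t * φ₂ t) t)
    (hk₀ : IsLeast {k : ℝ | ∀ t : ℝ, 0 ≤ t + k * (u t) ^ 2} k₀)
    (hk₀2 : 2 < k₀) (hk₀3 : k₀ < 10 / 3)
    (hp1 : 0 < φ₁ t₀) (hp2 : 0 < φ₂ t₀) (hp0 : 0 < φ₀ t₀)
    (hpc : 0 < (2 / 3) * φ₀ t₀ - ((k₀ - 2) / 6) * u t₀ * φ₁ t₀) :
    Tendsto φ₁ atBot atTop ∧ Tendsto φ₂ atBot atTop ∧ Tendsto φ₀ atBot atTop ∧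
    ∀ t ≤ t₀,
      (deriv φ₁ t = -(2 / 3) * φ₂ t ∧ deriv φ₁ t < 0) ∧
      deriv φ₂ t < -(1 / 6) * (t + k₀ * (u t) ^ 2) * φ₁ t ∧
      -(1 / 6) * (t + k₀ * (u t) ^ 2) * φ₁ t ≤ 0 := by
  have hlow : ∀ t, 0 ≤ t + k₀ * (u t) ^ 2 := hk₀.1
  have hk0pos : (0:ℝ) < k₀ := by linarith
  have hu'neg : ∀ t, u' t < 0 := key_uneg u u' k₀ hk0pos hu huODE hupos hlow
  -- continuity
  have hc1 : Continuous φ₁ := by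
    have : Differentiable ℝ φ₁ := fun t => (h1 t).differentiableAt
    exact this.continuous
  have hc2 : Continuous φ₂ := by
    have : Differentiable ℝ φ₂ := fun t => (h2 t).differentiableAt
    exact this.continuous
  have hc0 : Continuous φ₀ := by
    have : Differentiable ℝ φ₀ := fun t => (h0 t).differentiableAt
    exact this.continuous
  have hcu : Continuous u := by
    have : Differentiable ℝ u := fun t => (hu t).differentiableAt
    exact this.continuous
  obtain ⟨ψ, hψdef⟩ : ∃ ψ : ℝ → ℝ, ψ = fun t => 2 / 3 * φ₀ t - (k₀ - 2) / 6 * (u t * φ₁ t) :=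
    ⟨_, rfl⟩
  have hcψ : Continuous ψ := by
    rw [hψdef]
    exact Continuous.sub (continuous_const.mul hc0) (continuous_const.mul (hcu.mul hc1))
  have hψd : ∀ x, HasDerivAt ψ
      (2 / 3 * ((1 / 3) * u' x * φ₁ x - (2 / 3) * u x * φ₂ x)
        - (k₀ - 2) / 6 * (u' x * φ₁ x + u x * (-(2 / 3) * φ₂ x))) x := by
    intro x
    rw [hψdef]
    exact ((h0 x).const_mul (2/3)).sub (((hu x).mul (h1 x)).const_mul ((k₀ - 2)/6))
  have hψt₀ : 0 < ψ t₀ := by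
    have e : ψ t₀ = (2 / 3) * φ₀ t₀ - ((k₀ - 2) / 6) * u t₀ * φ₁ t₀ := by
      rw [hψdef]; ring
    rw [e]; exact hpc
  -- derivative formulas
  have hd2 : ∀ x, deriv φ₂ x = -(u x * ψ x) - 1 / 6 * ((x + k₀ * (u x) ^ 2) * φ₁ x) := by
    intro x
    rw [(h2 x).deriv, hψdef]
    ring
  have hdψ : ∀ x, deriv ψ x
      = (10 - 3 * k₀) / 18 * (u' x * φ₁ x) + (k₀ - 6) / 9 * (u x * φ₂ x) := by
    intro x
    rw [(hψd x).deriv]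
    ring
  -- ψ' < 0 whenever φ₁ > 0, φ₂ > 0
  have hdψneg : ∀ x, 0 < φ₁ x → 0 < φ₂ x → deriv ψ x < 0 := by
    intro x hx1 hx2
    rw [hdψ x]
    have e1 : u' x * φ₁ x < 0 := mul_neg_of_neg_of_pos (hu'neg x) hx1
    have e2 : 0 < u x * φ₂ x := mul_pos (hupos x) hx2
    have c1 : 0 < (10 - 3 * k₀) / 18 := by linarith
    have c2 : (k₀ - 6) / 9 < 0 := by linarith
    nlinarith
  -- φ₂' < 0 whenever φ₁ > 0, ψ > 0
  have hd2neg : ∀ x, 0 < φ₁ x → 0 < ψ x → deriv φ₂ x < 0 := by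
    intro x hx1 hxψ
    rw [hd2 x]
    have e1 : 0 < u x * ψ x := mul_pos (hupos x) hxψ
    have e2 : 0 ≤ (x + k₀ * (u x) ^ 2) * φ₁ x := mul_nonneg (hlow x) hx1.le
    linarith
  -- backward invariance of the cone
  have hcone : ∀ t ≤ t₀, 0 < φ₁ t ∧ 0 < φ₂ t ∧ 0 < ψ t := by
    by_contra hcon
    push_neg at hcon
    obtain ⟨s, hst₀, hsbad⟩ := hcon
    set S : Set ℝ := {r | r ∈ Icc s t₀ ∧ ¬(0 < φ₁ r ∧ 0 < φ₂ r ∧ 0 < ψ r)} with hSdef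
    have hSne : S.Nonempty :=
      ⟨s, ⟨le_rfl, hst₀⟩, fun hh => absurd (hsbad hh.1 hh.2.1) (not_le.mpr hh.2.2)⟩
    have hSbdd : BddAbove S := ⟨t₀, fun r hr => hr.1.2⟩
    have hSclosed : IsClosed S := by
      have he : S = Icc s t₀ ∩
          (φ₁ ⁻¹' Iic 0 ∪ φ₂ ⁻¹' Iic 0 ∪ ψ ⁻¹' Iic 0) := by
        ext r
        simp only [hSdef, mem_setOf_eq, mem_inter_iff, mem_union, mem_preimage, mem_Iic]
        constructor
        · rintro ⟨hr, hneg⟩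
          refine ⟨hr, ?_⟩
          by_contra hor
          push_neg at hor
          exact hneg ⟨hor.1.1, hor.1.2, hor.2⟩
        · rintro ⟨hr, hor⟩
          refine ⟨hr, fun hh => ?_⟩
          rcases hor with (h | h) | h
          · linarith [hh.1]
          · linarith [hh.2.1]
          · linarith [hh.2.2]
      rw [he]
      exact isClosed_Icc.inter (((isClosed_Iic.preimage hc1).union
        (isClosed_Iic.preimage hc2)).union (isClosed_Iic.preimage hcψ))
    set r₁ : ℝ := sSup S with hr₁def
    have hr₁S : r₁ ∈ S := hSclosed.csSup_mem hSne hSbdd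
    have hr₁t₀ : r₁ < t₀ := by
      rcases lt_or_eq_of_le hr₁S.1.2 with h | h
      · exact h
      · exfalso; exact hr₁S.2 (h ▸ ⟨hp1, hp2, hψt₀⟩)
    have hsr₁ : s ≤ r₁ := hr₁S.1.1
    have hopen : ∀ x ∈ Ioc r₁ t₀, 0 < φ₁ x ∧ 0 < φ₂ x ∧ 0 < ψ x := by
      rintro x ⟨hrx, hxt₀⟩
      by_contra hnx
      have hxS : x ∈ S := ⟨⟨le_trans hsr₁ hrx.le, hxt₀⟩, hnx⟩
      linarith [le_csSup hSbdd hxS]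
    have hA1 : StrictAntiOn φ₁ (Icc r₁ t₀) := by
      apply strictAntiOn_of_deriv_neg (convex_Icc r₁ t₀) hc1.continuousOn
      intro x hx
      rw [interior_Icc] at hx
      rw [(h1 x).deriv]
      have := (hopen x ⟨hx.1, hx.2.le⟩).2.1
      linarith
    have hA2 : StrictAntiOn φ₂ (Icc r₁ t₀) := by
      apply strictAntiOn_of_deriv_neg (convex_Icc r₁ t₀) hc2.continuousOn
      intro x hx
      rw [interior_Icc] at hx
      obtain ⟨hx1, hx2, hxψ⟩ := hopen x ⟨hx.1, hx.2.le⟩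
      exact hd2neg x hx1 hxψ
    have hA3 : StrictAntiOn ψ (Icc r₁ t₀) := by
      apply strictAntiOn_of_deriv_neg (convex_Icc r₁ t₀) hcψ.continuousOn
      intro x hx
      rw [interior_Icc] at hx
      obtain ⟨hx1, hx2, hxψ⟩ := hopen x ⟨hx.1, hx.2.le⟩
      exact hdψneg x hx1 hx2
    have hmem1 : r₁ ∈ Icc r₁ t₀ := ⟨le_rfl, hr₁t₀.le⟩
    have hmem2 : t₀ ∈ Icc r₁ t₀ := ⟨hr₁t₀.le, le_rfl⟩
    exact hr₁S.2 ⟨lt_trans hp1 (hA1 hmem1 hmem2 hr₁t₀),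
      lt_trans hp2 (hA2 hmem1 hmem2 hr₁t₀), lt_trans hψt₀ (hA3 hmem1 hmem2 hr₁t₀)⟩
  -- monotonicity of φ₂ and ψ on (-∞, t₀]
  have hmono2 : AntitoneOn φ₂ (Iic t₀) := by
    apply antitoneOn_of_deriv_nonpos (convex_Iic t₀) hc2.continuousOn
      (fun x _ => (h2 x).differentiableAt.differentiableWithinAt)
    intro x hx
    rw [interior_Iic] at hx
    obtain ⟨ha, hb, hcc⟩ := hcone x (le_of_lt hx)
    exact (hd2neg x ha hcc).le
  have hmonoψ : AntitoneOn ψ (Iic t₀) := by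
    apply antitoneOn_of_deriv_nonpos (convex_Iic t₀) hcψ.continuousOn
      (fun x _ => (hψd x).differentiableAt.differentiableWithinAt)
    intro x hx
    rw [interior_Iic] at hx
    obtain ⟨ha, hb, hcc⟩ := hcone x (le_of_lt hx)
    exact (hdψneg x ha hb).le
  have hu1 : ∀ x ≤ -k₀, 1 ≤ u x := by
    intro x hx
    have hA : k₀ * 1 ≤ k₀ * u x ^ 2 := by linarith [hlow x]
    have hB : 1 ≤ u x ^ 2 := (mul_le_mul_iff_right₀ hk0pos).1 hA
    nlinarith [hupos x]
  set T' : ℝ := min t₀ (-k₀) with hT'def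
  have hT't₀ : T' ≤ t₀ := min_le_left _ _
  have hT'k : T' ≤ -k₀ := min_le_right _ _
  -- tendsto φ₁
  have ht1 : Tendsto φ₁ atBot atTop := by
    apply tendsto_of_deriv_le_neg φ₁ (fun x => -(2/3) * φ₂ x) t₀ (2/3 * φ₂ t₀) h1
      (by linarith)
    intro x hx
    have := hmono2 (mem_Iic.2 hx) (mem_Iic.2 le_rfl) hx
    linarith
  -- tendsto φ₂
  have ht2 : Tendsto φ₂ atBot atTop := by
    apply tendsto_of_deriv_le_neg φ₂
      (fun x => -(2/3) * u x * φ₀ x - (1/6) * (x + 2 * (u x) ^ 2) * φ₁ x) T' (ψ t₀) h2 hψt₀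
    intro x hx
    have hxt₀ : x ≤ t₀ := le_trans hx hT't₀
    have hxk : x ≤ -k₀ := le_trans hx hT'k
    have e2 : -(2/3) * u x * φ₀ x - (1/6) * (x + 2 * (u x) ^ 2) * φ₁ x
        = -(u x * ψ x) - 1 / 6 * ((x + k₀ * (u x) ^ 2) * φ₁ x) := by
      rw [← (h2 x).deriv, hd2 x]
    rw [e2]
    obtain ⟨ha, hb, hcc⟩ := hcone x hxt₀
    have hψx : ψ t₀ ≤ ψ x := hmonoψ (mem_Iic.2 hxt₀) (mem_Iic.2 le_rfl) hxt₀
    have hux : 1 ≤ u x := hu1 x hxk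
    have h3 : 0 ≤ (x + k₀ * (u x) ^ 2) * φ₁ x := mul_nonneg (hlow x) ha.le
    nlinarith
  -- tendsto φ₀
  have ht0 : Tendsto φ₀ atBot atTop := by
    apply tendsto_of_deriv_le_neg φ₀
      (fun x => (1/3) * u' x * φ₁ x - (2/3) * u x * φ₂ x) T' (2/3 * φ₂ t₀) h0
      (by linarith)
    intro x hx
    have hxt₀ : x ≤ t₀ := le_trans hx hT't₀
    have hxk : x ≤ -k₀ := le_trans hx hT'k
    obtain ⟨ha, hb, hcc⟩ := hcone x hxt₀
    have hφ₂x : φ₂ t₀ ≤ φ₂ x := hmono2 (mem_Iic.2 hxt₀) (mem_Iic.2 le_rfl) hxt₀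
    have hux : 1 ≤ u x := hu1 x hxk
    have h3 : u' x * φ₁ x < 0 := mul_neg_of_neg_of_pos (hu'neg x) ha
    nlinarith
  refine ⟨ht1, ht2, ht0, ?_⟩
  intro t ht
  obtain ⟨ha, hb, hcc⟩ := hcone t ht
  have hψpos : 0 < u t * ψ t := mul_pos (hupos t) hcc
  have hnn : 0 ≤ (t + k₀ * (u t) ^ 2) * φ₁ t := mul_nonneg (hlow t) ha.le
  refine ⟨⟨(h1 t).deriv, by rw [(h1 t).deriv]; linarith⟩, ?_, by nlinarith⟩
  rw [hd2 t]
  nlinarith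
end
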